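/- arXiv:2305.02940 — 8 statements merged into one kernel-verified Lean document; each statement's English description precedes it below -/
import Mathlib

section
/- Let V be a finite-dimensional vector space with an alternating bilinear form Ψ and let S ≤ V be a totally isotropic subspace (Ψ vanishes on S × S). Then dim(S) ≤ (dim(V) + dim(S ∩ Rad(V)))/2. -/
theorem stmt_2 {K V : Type*} [Field K] [AddCommGroup V] [Module K V] [FiniteDimensional K V]
    (Ψ : LinearMap.BilinForm K V) (hΨ : Ψ.IsAlt) (S : Submodule K V)
    (hS : ∀ s ∈ S, ∀ s' ∈ S, Ψ s s' = 0) :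
    2 * Module.finrank K S ≤ Module.finrank K V + Module.finrank K ↥(S ⊓ Ψ.orthogonal ⊤) := by
  classical
  set g : S →ₗ[K] Module.Dual K V := Ψ.domRestrict S with hg
  -- range g ≤ dualAnnihilator S
  have hrange : LinearMap.range g ≤ S.dualAnnihilator := by
    rintro φ ⟨s, rfl⟩
    rw [Submodule.mem_dualAnnihilator]
    intro w hw
    exact hS s s.2 w hw
  -- ker g corresponds to S ⊓ orthogonal ⊤
  have hker : (LinearMap.ker g).map S.subtype = S ⊓ Ψ.orthogonal ⊤ := by
    ext x
    simp only [Submodule.mem_map, LinearMap.mem_ker, Submodule.mem_inf,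
      LinearMap.BilinForm.mem_orthogonal_iff]
    constructor
    · rintro ⟨⟨s, hs⟩, h1, rfl⟩
      refine ⟨hs, fun n _ => ?_⟩
      have : Ψ s n = 0 := by
        have := congrArg (fun f => f n) h1
        simpa [hg] using this
      have hskew := LinearMap.IsAlt.neg hΨ s n
      simp only [LinearMap.BilinForm.IsOrtho, Submodule.subtype_apply]
      rw [← hskew, this, neg_zero]
    · rintro ⟨hx, h2⟩
      refine ⟨⟨x, hx⟩, ?_, rfl⟩
      ext n
      have := h2 n Submodule.mem_top
      have hskew := LinearMap.IsAlt.neg hΨ x n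
      simp only [hg, LinearMap.domRestrict_apply]
      rw [LinearMap.zero_apply, ← neg_neg ((Ψ x) n), hskew, this, neg_zero]
  have hdim1 : Module.finrank K (LinearMap.range g) + Module.finrank K (LinearMap.ker g)
      = Module.finrank K S := LinearMap.finrank_range_add_finrank_ker g
  have hdim2 : Module.finrank K (LinearMap.ker g)
      = Module.finrank K ↥(S ⊓ Ψ.orthogonal ⊤) := by
    rw [← hker]; exact (Submodule.finrank_map_subtype_eq S _).symm
  have hdim3 : Module.finrank K (LinearMap.range g) ≤ Module.finrank K S.dualAnnihilator :=
    Submodule.finrank_mono hrange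
  have hdim4 : Module.finrank K S.dualAnnihilator + Module.finrank K S = Module.finrank K V := by
    have e : Module.finrank K (V ⧸ S) = Module.finrank K S.dualAnnihilator :=
      LinearEquiv.finrank_eq (Subspace.quotEquivAnnihilator S)
    have := Submodule.finrank_quotient_add_finrank S
    omega
  omega
end

section
/- Let V be a symplectic space of dimension 2n over the finite field F_q with n ≥ 1. Then the number of 2-dimensional subspaces of V on which the symplectic form is non-degenerate equals q^{2n-2}(q^{2n}-1)/(q^2-1). -/
open Module

-- fiber of a nonzero functional over 1
lemma aux_fiber {K U : Type*} [Field K] [Fintype K] [AddCommGroup U] [Module K U]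
    [FiniteDimensional K U] (f : U →ₗ[K] K) (hf : f ≠ 0) :
    Nat.card {v : U // f v = 1} = Fintype.card K ^ (Module.finrank K U - 1) := by
  obtain ⟨v0, hv0⟩ : ∃ v0, f v0 ≠ 0 := by
    by_contra h; push_neg at h; exact hf (LinearMap.ext fun v => by simp [h])
  set v1 := (f v0)⁻¹ • v0 with hv1def
  have hv1 : f v1 = 1 := by simp [hv1def, inv_mul_cancel₀ hv0]
  have e : {v : U // f v = 1} ≃ LinearMap.ker f :=
    { toFun := fun v => ⟨v.1 - v1, by simp [LinearMap.mem_ker, v.2, hv1]⟩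
      invFun := fun w => ⟨w.1 + v1, by
        have h2 := w.2; rw [LinearMap.mem_ker] at h2; simp [h2, hv1]⟩
      left_inv := fun v => by ext; simp
      right_inv := fun w => by ext; simp }
  rw [Nat.card_congr e]
  have hrange : LinearMap.range f = ⊤ :=
    LinearMap.range_eq_top.mpr fun c => ⟨c • v1, by simp [hv1]⟩
  have hk : Module.finrank K (LinearMap.ker f) = Module.finrank K U - 1 := by
    have h := LinearMap.finrank_range_add_finrank_ker f
    rw [hrange, finrank_top, Module.finrank_self] at h
    omega
  haveI : Finite U := Module.finite_of_finite K
  haveI : Fintype (LinearMap.ker f) := Fintype.ofFinite _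
  rw [Nat.card_eq_fintype_card, card_eq_pow_finrank (K := K), hk]

-- number of hyperbolic pairs for a nondegenerate bilinear form
lemma card_hyp_pairs {K U : Type*} [Field K] [Fintype K] [AddCommGroup U] [Module K U]
    [FiniteDimensional K U] (B : LinearMap.BilinForm K U) (hB : B.Nondegenerate) :
    Nat.card {p : U × U // B p.1 p.2 = 1} =
      (Fintype.card K ^ Module.finrank K U - 1) *
        Fintype.card K ^ (Module.finrank K U - 1) := by
  classical
  haveI : Finite U := Module.finite_of_finite K
  haveI : Fintype U := Fintype.ofFinite U
  haveI : ∀ u : U, Fintype {v // B u v = 1} := fun u => Fintype.ofFinite _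
  rw [Nat.card_congr (Equiv.subtypeProdEquivSigmaSubtype fun (u v : U) => B u v = 1)]
  rw [Nat.card_eq_fintype_card, Fintype.card_sigma]
  have key : ∀ u : U, Fintype.card {v // B u v = 1} =
      if u = 0 then 0 else Fintype.card K ^ (Module.finrank K U - 1) := by
    intro u
    split_ifs with h
    · subst h
      rw [Fintype.card_eq_zero_iff]
      exact ⟨fun v => by have := v.2; simp at this⟩
    · have hBu : B u ≠ 0 := fun hc => h (hB.1 u fun n => by rw [hc]; rfl)
      rw [← Nat.card_eq_fintype_card, aux_fiber (B u) hBu]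
  rw [Finset.sum_congr rfl fun u _ => key u, Finset.sum_ite]
  simp only [Finset.sum_const, smul_zero, zero_add, smul_eq_mul]
  have : (Finset.univ.filter fun u : U => ¬u = 0) = Finset.univ.erase 0 := by
    ext u; simp [Finset.mem_erase, and_comm]
  rw [this, Finset.card_erase_of_mem (Finset.mem_univ 0), Finset.card_univ,
    card_eq_pow_finrank (K := K)]
  simp

-- a hyperbolic pair spans a nondegenerate plane
lemma hyp_span {K V : Type*} [Field K] [AddCommGroup V] [Module K V]
    (Ψ : LinearMap.BilinForm K V) (hΨ : Ψ.IsAlt) {u v : V} (huv : Ψ u v = 1) :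
    Module.finrank K (Submodule.span K {u, v}) = 2 ∧
      (Ψ.restrict (Submodule.span K {u, v})).Nondegenerate := by
  have hvu : Ψ v u = -1 := by rw [← hΨ.neg_eq, huv]
  have hne : u ≠ v := by
    intro h; rw [h, hΨ v] at huv; exact zero_ne_one huv
  have hli : LinearIndependent K ![u, v] := by
    rw [LinearIndependent.pair_iff]
    intro s t hst
    have h1 : Ψ (s • u + t • v) v = s := by
      simp [hΨ v, huv]
    have h2 : Ψ (s • u + t • v) u = -t := by
      simp [hΨ u, hvu]
    rw [hst] at h1 h2
    simp at h1 h2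
    exact ⟨h1.symm, h2⟩
  have hspan : Module.finrank K (Submodule.span K {u, v}) = 2 := by
    have : ({u, v} : Set V) = Set.range ![u, v] := by
      ext x; simp [Matrix.range_cons, Matrix.range_empty]; tauto
    rw [this, finrank_span_eq_card hli, Fintype.card_fin]
  refine ⟨hspan, ?_⟩
  suffices hL : (Ψ.restrict (Submodule.span K {u, v})).SeparatingLeft from
    ⟨hL, fun m hm => hL m fun n => hΨ.isRefl _ _ (hm n)⟩
  intro m hm
  obtain ⟨a, b, hab⟩ := Submodule.mem_span_pair.mp m.2
  have hu : u ∈ Submodule.span K {u, v} := Submodule.subset_span (by simp)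
  have hv : v ∈ Submodule.span K {u, v} := Submodule.subset_span (by simp)
  have h1 := hm ⟨v, hv⟩
  have h2 := hm ⟨u, hu⟩
  rw [LinearMap.BilinForm.restrict_apply] at h1 h2
  rw [← hab] at h1 h2
  have ha : a = 0 := by simpa [hΨ v, huv] using h1
  have hb : b = 0 := by
    have h3 : -b = 0 := by simpa [hΨ u, hvu] using h2
    exact neg_eq_zero.mp h3
  ext
  simp [← hab, ha, hb]

theorem stmt_5 {K V : Type*} [Field K] [Fintype K] [AddCommGroup V] [Module K V]
    (q n : ℕ) (hq : Fintype.card K = q) (hn : 1 ≤ n)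
    (hV : Module.finrank K V = 2 * n)
    (Ψ : LinearMap.BilinForm K V) (hΨ : Ψ.IsAlt) (hnd : Ψ.Nondegenerate) :
    Nat.card {W : Submodule K V //
        Module.finrank K W = 2 ∧ (Ψ.restrict W).Nondegenerate} * (q ^ 2 - 1) =
      q ^ (2 * n - 2) * (q ^ (2 * n) - 1) := by
  subst hq
  set q := Fintype.card K with hq
  haveI : FiniteDimensional K V := FiniteDimensional.of_finrank_pos (by omega)
  haveI : Finite V := Module.finite_of_finite K
  set S := {W : Submodule K V //
    Module.finrank K W = 2 ∧ (Ψ.restrict W).Nondegenerate} with hS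
  haveI : Finite (Submodule K V) := Finite.of_injective _ SetLike.coe_injective
  haveI : Finite S := Subtype.finite
  haveI : Fintype S := Fintype.ofFinite S
  set H := {p : V × V // Ψ p.1 p.2 = 1} with hH
  -- total count
  have hcardH : Nat.card H = (q ^ (2 * n) - 1) * q ^ (2 * n - 1) := by
    rw [card_hyp_pairs Ψ hnd, hV]
  -- the fibration over nondegenerate planes
  let φ : H → S := fun p => ⟨Submodule.span K {p.1.1, p.1.2},
    (hyp_span Ψ hΨ p.2).1, (hyp_span Ψ hΨ p.2).2⟩
  have hfiber : ∀ W : S, Nat.card {p : H // φ p = W} = (q ^ 2 - 1) * q := by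
    intro W
    have e : {p : H // φ p = W} ≃
        {p : W.1 × W.1 // (Ψ.restrict W.1) p.1 p.2 = 1} := by
      refine
        { toFun := fun p => ⟨(⟨p.1.1.1, ?_⟩, ⟨p.1.1.2, ?_⟩), ?_⟩
          invFun := fun p => ⟨⟨(p.1.1.1, p.1.2.1), ?_⟩, ?_⟩
          left_inv := fun p => ?_
          right_inv := fun p => ?_ }
      · have := congrArg Subtype.val p.2
        simp only [φ] at this
        rw [← this]
        exact Submodule.subset_span (by simp)
      · have := congrArg Subtype.val p.2
        simp only [φ] at this
        rw [← this]
        exact Submodule.subset_span (by simp)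
      · rw [LinearMap.BilinForm.restrict_apply]
        exact p.1.2
      · have h2 := p.2
        rwa [LinearMap.BilinForm.restrict_apply] at h2
      · -- span equals W
        have h1 : Ψ p.1.1.1 p.1.2.1 = 1 := by
          have := p.2; rwa [LinearMap.BilinForm.restrict_apply] at this
        apply Subtype.ext
        apply Submodule.eq_of_le_of_finrank_eq
        · rw [Submodule.span_le]
          intro x hx
          rcases hx with h | h
          · rw [h]; exact p.1.1.2
          · rw [Set.mem_singleton_iff.mp h]; exact p.1.2.2
        · rw [(hyp_span Ψ hΨ h1).1, W.2.1]
      · rfl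
      · rfl
    rw [Nat.card_congr e, card_hyp_pairs _ W.2.2, W.2.1]
    simp [hq]
  -- put it together
  have hsum : Nat.card H = Nat.card S * ((q ^ 2 - 1) * q) := by
    rw [← Nat.card_congr (Equiv.sigmaFiberEquiv φ)]
    haveI : Finite H := Subtype.finite
    haveI : Fintype H := Fintype.ofFinite H
    haveI : ∀ W : S, Fintype {p : H // φ p = W} := fun W => Fintype.ofFinite _
    rw [Nat.card_eq_fintype_card, Fintype.card_sigma]
    have : ∀ W : S, Fintype.card {p : H // φ p = W} = (q ^ 2 - 1) * q := fun W => by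
      rw [← Nat.card_eq_fintype_card, hfiber W]
    rw [Finset.sum_congr rfl fun W _ => this W, Finset.sum_const, smul_eq_mul,
      Finset.card_univ, Nat.card_eq_fintype_card]
  rw [hcardH] at hsum
  have hq1 : 1 ≤ q := Fintype.card_pos
  have hpow : q ^ (2 * n - 1) = q ^ (2 * n - 2) * q := by
    rw [← pow_succ]; congr 1; omega
  apply Nat.eq_of_mul_eq_mul_right (show 0 < q from hq1)
  rw [mul_assoc, mul_comm (q ^ (2 * n - 2)) _, mul_assoc, ← hpow, ← hsum]
end

section
/- Let V be an r-degenerate symplectic space of dimension 2n + r over the finite field F_q, meaning Ψ is an alternating bilinear form on V with radical of dimension r. Then the number of 2-dimensional non-degenerate subspaces of V equals q^{2r} times the number of 2-dimensional non-degenerate subspaces of a non-degenerate symplectic space of dimension 2n over F_q, i.e., it equals q^{2r} · q^{2n-2}(q^{2n}-1)/(q^2-1). -/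
open Module

section AuxCount

variable {K U : Type*} [Field K] [Fintype K] [AddCommGroup U] [Module K U]
    [FiniteDimensional K U]

lemma aux_row (B : LinearMap.BilinForm K U) (u : U) (hu : B u ≠ 0) :
    Nat.card {v : U // B u v ≠ 0} =
      Fintype.card K ^ finrank K U - Fintype.card K ^ (finrank K U - 1) := by
  classical
  haveI : Finite U := Module.finite_of_finite K
  haveI : Fintype U := Fintype.ofFinite U
  have hker : finrank K (LinearMap.ker (B u)) = finrank K U - 1 := by
    have h1 : finrank K (LinearMap.range (B u)) + finrank K (LinearMap.ker (B u))
        = finrank K U := LinearMap.finrank_range_add_finrank_ker (B u)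
    have hr : finrank K (LinearMap.range (B u)) = 1 := by
      have hne : LinearMap.range (B u) ≠ ⊥ := by
        rw [ne_eq, LinearMap.range_eq_bot]; exact hu
      have hle : finrank K (LinearMap.range (B u)) ≤ finrank K K := Submodule.finrank_le _
      rw [finrank_self] at hle
      have : finrank K (LinearMap.range (B u)) ≠ 0 := by
        rw [ne_eq, Submodule.finrank_eq_zero]; exact hne
      omega
    omega
  have hcompl : Nat.card {v : U // B u v = 0} = Fintype.card K ^ (finrank K U - 1) := by
    rw [Nat.card_congr (Equiv.subtypeEquivRight (q := fun v => v ∈ LinearMap.ker (B u))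
      (fun v => (LinearMap.mem_ker).symm))]
    rw [Nat.card_eq_fintype_card, card_eq_pow_finrank (K := K), hker]
  rw [Nat.card_eq_fintype_card, Fintype.card_subtype_compl,
    card_eq_pow_finrank (K := K) (V := U), ← hcompl, Nat.card_eq_fintype_card]

lemma aux_pairs (B : LinearMap.BilinForm K U) :
    Nat.card {p : U × U // B p.1 p.2 ≠ 0} =
      Nat.card {u : U // B u ≠ 0} *
        (Fintype.card K ^ finrank K U - Fintype.card K ^ (finrank K U - 1)) := by
  classical
  haveI : Finite U := Module.finite_of_finite K
  haveI : Fintype U := Fintype.ofFinite U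
  set c := Fintype.card K ^ finrank K U - Fintype.card K ^ (finrank K U - 1) with hc
  rw [Nat.card_congr (Equiv.subtypeProdEquivSigmaSubtype fun (a b : U) => B a b ≠ 0),
    Nat.card_eq_fintype_card, Fintype.card_sigma]
  have hterm : ∀ u : U, Fintype.card {v : U // B u v ≠ 0} = if B u ≠ 0 then c else 0 := by
    intro u
    by_cases hu : B u = 0
    · have h0 : Fintype.card {v : U // B u v ≠ 0} = 0 :=
        Fintype.card_eq_zero_iff.mpr ⟨fun v => v.2 (by simp [hu])⟩
      rw [h0, if_neg (not_not.mpr hu)]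
    · rw [if_pos hu, hc, ← aux_row B u hu, Nat.card_eq_fintype_card]
  calc (∑ u : U, Fintype.card {v : U // B u v ≠ 0})
      = ∑ u : U, if B u ≠ 0 then c else 0 := Finset.sum_congr rfl fun u _ => hterm u
    _ = (Finset.univ.filter fun u : U => B u ≠ 0).card * c := by
        rw [← Finset.sum_filter, Finset.sum_const, smul_eq_mul]
    _ = Nat.card {u : U // B u ≠ 0} * c := by
        rw [Nat.card_eq_fintype_card, Fintype.card_subtype]

lemma aux_nondeg (B : LinearMap.BilinForm K U) (hB : B.Nondegenerate) :
    Nat.card {u : U // B u ≠ 0} = Fintype.card K ^ finrank K U - 1 := by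
  classical
  haveI : Finite U := Module.finite_of_finite K
  haveI : Fintype U := Fintype.ofFinite U
  have h1 : Fintype.card {u : U // B u = 0} = 1 := by
    rw [Fintype.card_congr (Equiv.subtypeEquivRight (q := fun u : U => u = 0)
      (fun u => ⟨fun h => hB.1 u (fun n => by simp [h]), fun h => by simp [h]⟩))]
    exact Fintype.card_subtype_eq 0
  rw [Nat.card_eq_fintype_card, Fintype.card_subtype_compl,
    card_eq_pow_finrank (K := K), h1]

end AuxCount

section AuxSpan

variable {K V : Type*} [Field K] [AddCommGroup V] [Module K V]

lemma aux_span_rank (Ψ : LinearMap.BilinForm K V) (hΨ : Ψ.IsAlt) {u v : V}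
    (h : Ψ u v ≠ 0) : finrank K (Submodule.span K {u, v}) = 2 := by
  have hli : LinearIndependent K ![u, v] := by
    rw [LinearIndependent.pair_iff]
    intro s t hst
    have h1 : s * Ψ u v = 0 := by
      have := congrArg (fun w => Ψ w v) hst
      simpa [hΨ v] using this
    have hs : s = 0 := by
      rcases mul_eq_zero.mp h1 with h' | h'
      · exact h'
      · exact absurd h' h
    have h2 : t * Ψ v u = 0 := by
      have := congrArg (fun w => Ψ w u) hst
      simpa [hΨ u] using this
    have hvu : Ψ v u ≠ 0 := by
      rw [← hΨ.neg_eq u v]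
      simpa using h
    have ht : t = 0 := by
      rcases mul_eq_zero.mp h2 with h' | h'
      · exact h'
      · exact absurd h' hvu
    exact ⟨hs, ht⟩
  have h2 := finrank_span_eq_card hli
  have hr : Set.range ![u, v] = {u, v} := by
    simp [Matrix.range_cons, Matrix.range_empty, Set.pair_comm]
  rw [hr] at h2
  simpa using h2

lemma aux_restrict_nondeg (Ψ : LinearMap.BilinForm K V) (hΨ : Ψ.IsAlt) {u v : V}
    (h : Ψ u v ≠ 0) : (Ψ.restrict (Submodule.span K {u, v})).Nondegenerate := by
  refine (LinearMap.IsRefl.nondegenerate_iff_separatingLeft (B := Ψ.restrict (Submodule.span K {u, v})) (fun x y hxy => hΨ.isRefl _ _ hxy)).mpr ?_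
  intro m hm
  obtain ⟨a, b, hab⟩ := Submodule.mem_span_pair.mp m.2
  have hu' : u ∈ Submodule.span K {u, v} := Submodule.subset_span (by simp)
  have hv' : v ∈ Submodule.span K {u, v} := Submodule.subset_span (by simp)
  have h1 : Ψ (↑m) v = 0 := hm ⟨v, hv'⟩
  have h2 : Ψ (↑m) u = 0 := hm ⟨u, hu'⟩
  rw [← hab] at h1 h2
  have ha : a = 0 := by
    have : a * Ψ u v = 0 := by simpa [hΨ v] using h1
    rcases mul_eq_zero.mp this with h' | h'
    · exact h'
    · exact absurd h' h
  have hvu : Ψ v u ≠ 0 := by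
    rw [← hΨ.neg_eq u v]; simpa using h
  have hb : b = 0 := by
    have : b * Ψ v u = 0 := by simpa [hΨ u] using h2
    rcases mul_eq_zero.mp this with h' | h'
    · exact h'
    · exact absurd h' hvu
  ext
  rw [← hab, ha, hb]
  simp

end AuxSpan

lemma aux_fiber_s6 {K V : Type*} [Field K] [Fintype K] [AddCommGroup V] [Module K V]
    [FiniteDimensional K V] (Ψ : LinearMap.BilinForm K V) (hΨ : Ψ.IsAlt)
    (W : Submodule K V) (h2 : finrank K W = 2) (hnd : (Ψ.restrict W).Nondegenerate) :
    Nat.card {p : V × V // Ψ p.1 p.2 ≠ 0 ∧ Submodule.span K {p.1, p.2} = W} =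
      (Fintype.card K ^ 2 - 1) * (Fintype.card K ^ 2 - Fintype.card K) := by
  classical
  have hmem : ∀ p : {p : V × V // Ψ p.1 p.2 ≠ 0 ∧ Submodule.span K {p.1, p.2} = W},
      p.1.1 ∈ W ∧ p.1.2 ∈ W := by
    rintro ⟨⟨u, v⟩, hne, hsp⟩
    exact ⟨hsp ▸ Submodule.subset_span (by simp), hsp ▸ Submodule.subset_span (by simp)⟩
  let e : {p : V × V // Ψ p.1 p.2 ≠ 0 ∧ Submodule.span K {p.1, p.2} = W} ≃
      {p : ↥W × ↥W // (Ψ.restrict W) p.1 p.2 ≠ 0} :=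
    { toFun := fun p => ⟨(⟨p.1.1, (hmem p).1⟩, ⟨p.1.2, (hmem p).2⟩), p.2.1⟩
      invFun := fun p => ⟨(↑p.1.1, ↑p.1.2), p.2, by
        apply Submodule.eq_of_le_of_finrank_le
        · rw [Submodule.span_le]
          intro x hx
          rcases hx with hx | hx <;> simp_all
        · have hx : Ψ (↑p.1.1 : V) (↑p.1.2 : V) ≠ 0 := p.2
          have hrk := aux_span_rank Ψ hΨ hx
          rw [h2]
          exact le_of_eq hrk.symm⟩
      left_inv := fun p => rfl
      right_inv := fun p => rfl }
  rw [Nat.card_congr e, aux_pairs (Ψ.restrict W),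
    aux_nondeg (Ψ.restrict W) hnd, h2]
  norm_num

theorem stmt_6 {K V : Type*} [Field K] [Fintype K] [AddCommGroup V] [Module K V]
    [FiniteDimensional K V]
    (q n r : ℕ) (hq : Fintype.card K = q)
    (hV : Module.finrank K V = 2 * n + r)
    (Ψ : LinearMap.BilinForm K V) (hΨ : Ψ.IsAlt)
    (hrad : Module.finrank K ↥(Ψ.orthogonal ⊤) = r) :
    Nat.card {W : Submodule K V //
        Module.finrank K W = 2 ∧ (Ψ.restrict W).Nondegenerate} * (q ^ 2 - 1) =
      q ^ (2 * r) * (q ^ (2 * n - 2) * (q ^ (2 * n) - 1)) := by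
  classical
  subst hq
  haveI : Finite V := Module.finite_of_finite K
  haveI : Fintype V := Fintype.ofFinite V
  have hq2 : 2 ≤ Fintype.card K := Fintype.one_lt_card
  let f : {p : V × V // Ψ p.1 p.2 ≠ 0} →
      {W : Submodule K V // finrank K W = 2 ∧ (Ψ.restrict W).Nondegenerate} := fun p =>
    ⟨Submodule.span K {p.1.1, p.1.2}, aux_span_rank Ψ hΨ p.2, aux_restrict_nondeg Ψ hΨ p.2⟩
  have hfiber : ∀ W : {W : Submodule K V // finrank K W = 2 ∧ (Ψ.restrict W).Nondegenerate},
      Nat.card {p : {p : V × V // Ψ p.1 p.2 ≠ 0} // f p = W} =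
      (Fintype.card K ^ 2 - 1) * (Fintype.card K ^ 2 - Fintype.card K) := by
    intro W
    have e : {p : {p : V × V // Ψ p.1 p.2 ≠ 0} // f p = W} ≃
        {p : V × V // Ψ p.1 p.2 ≠ 0 ∧ Submodule.span K {p.1, p.2} = ↑W} :=
      { toFun := fun p => ⟨p.1.1, p.1.2, congrArg Subtype.val p.2⟩
        invFun := fun p => ⟨⟨p.1, p.2.1⟩, Subtype.ext p.2.2⟩
        left_inv := fun p => rfl
        right_inv := fun p => rfl }
    rw [Nat.card_congr e, aux_fiber_s6 Ψ hΨ W.1 W.2.1 W.2.2]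
  have hsigma : Nat.card {p : V × V // Ψ p.1 p.2 ≠ 0} =
      Nat.card {W : Submodule K V // finrank K W = 2 ∧ (Ψ.restrict W).Nondegenerate} *
        ((Fintype.card K ^ 2 - 1) * (Fintype.card K ^ 2 - Fintype.card K)) := by
    rw [Nat.card_congr (Equiv.sigmaFiberEquiv f).symm, Nat.card_eq_fintype_card,
      Fintype.card_sigma]
    rw [Finset.sum_congr rfl fun W _ => by
      rw [← Nat.card_eq_fintype_card, hfiber W]]
    rw [Finset.sum_const, smul_eq_mul, Finset.card_univ, ← Nat.card_eq_fintype_card]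
  have hradcount : Nat.card {u : V // Ψ u = 0} = Fintype.card K ^ r := by
    rw [Nat.card_congr (Equiv.subtypeEquivRight (q := fun u : V => u ∈ Ψ.orthogonal ⊤)
      (fun u => ?_))]
    · rw [Nat.card_eq_fintype_card, card_eq_pow_finrank (K := K), hrad]
    · constructor
      · intro h
        refine LinearMap.BilinForm.mem_orthogonal_iff.mpr ?_
        intro m _
        show Ψ m u = 0
        rw [← hΨ.neg_eq u m]
        simp [h]
      · intro h
        ext v
        have h1 : Ψ v u = 0 := h v Submodule.mem_top
        have h2 : -(Ψ u v) = 0 := by rw [hΨ.neg_eq u v]; exact h1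
        simpa using neg_eq_zero.mp h2
  have hleft : Nat.card {u : V // Ψ u ≠ 0} =
      Fintype.card K ^ (2 * n + r) - Fintype.card K ^ r := by
    rw [Nat.card_eq_fintype_card, Fintype.card_subtype_compl,
      card_eq_pow_finrank (K := K), hV, ← hradcount, Nat.card_eq_fintype_card]
  have hpairs := aux_pairs Ψ
  rw [hleft, hV, hsigma] at hpairs
  set q := Fintype.card K with hq
  set A := Nat.card {W : Submodule K V // finrank K W = 2 ∧ (Ψ.restrict W).Nondegenerate}
    with hA
  clear_value q A
  clear hsigma hleft hradcount hfiber
  -- hpairs : A * ((q^2-1)*(q^2-q)) = (q^(2n+r) - q^r) * (q^(2n+r) - q^(2n+r-1))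
  have hlt : q < q ^ 2 := by nlinarith
  have hlt1 : 1 < q ^ 2 := by nlinarith
  rcases Nat.eq_zero_or_pos n with hn | hn
  · subst hn
    have hzero : A * ((q ^ 2 - 1) * (q ^ 2 - q)) = 0 := by
      rw [hpairs]; simp
    have hA0 : A = 0 := by
      rcases Nat.mul_eq_zero.mp hzero with h | h
      · exact h
      · exfalso
        rcases Nat.mul_eq_zero.mp h with h' | h' <;> omega
    rw [hA0, Nat.zero_mul]
    norm_num
  · obtain ⟨m, rfl⟩ : ∃ m, n = m + 1 := ⟨n - 1, by omega⟩
    have hqq : 0 < q ^ 2 - q := by omega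
    apply Nat.eq_of_mul_eq_mul_right hqq
    calc A * (q ^ 2 - 1) * (q ^ 2 - q)
        = A * ((q ^ 2 - 1) * (q ^ 2 - q)) := by ring
      _ = (q ^ (2 * (m + 1) + r) - q ^ r) *
          (q ^ (2 * (m + 1) + r) - q ^ (2 * (m + 1) + r - 1)) := hpairs
      _ = q ^ (2 * r) * (q ^ (2 * (m + 1) - 2) * (q ^ (2 * (m + 1)) - 1)) * (q ^ 2 - q) := by
          have e1 : 2 * (m + 1) + r - 1 = 2 * m + r + 1 := by omega
          have e2 : 2 * (m + 1) + r = 2 * m + r + 2 := by omega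
          have e3 : 2 * (m + 1) - 2 = 2 * m := by omega
          have e4 : 2 * (m + 1) = 2 * m + 2 := by omega
          rw [e1, e2, e3, e4]
          have hq1 : 1 ≤ q := by omega
          have l1 : q ^ r ≤ q ^ (2 * m + r + 2) := Nat.pow_le_pow_right hq1 (by omega)
          have l2 : q ^ (2 * m + r + 1) ≤ q ^ (2 * m + r + 2) :=
            Nat.pow_le_pow_right hq1 (by omega)
          have l3 : 1 ≤ q ^ (2 * m + 2) := Nat.one_le_pow _ _ (by omega)
          have l4 : q ≤ q ^ 2 := by nlinarith
          zify [l1, l2, l3, l4]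
          ring
end

section
/- Let V be a symplectic space of dimension 2n over F_q and fix a 2-dimensional non-degenerate subspace S. Then the number of 2-dimensional non-degenerate subspaces W with dim(S + W) = 3 equals (q^{2n-2} − 1)(q + 1). -/
open Module Submodule

section Helpers

lemma fiberCount {α β : Type*} [Finite α] [Finite β] (f : α → β) (k : ℕ)
    (h : ∀ b, Nat.card {a // f a = b} = k) : Nat.card α = Nat.card β * k := by
  classical
  cases nonempty_fintype α
  cases nonempty_fintype β
  rw [Nat.card_eq_fintype_card, Nat.card_eq_fintype_card,
    Fintype.card_congr (Equiv.sigmaFiberEquiv f).symm, Fintype.card_sigma]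
  have : ∀ b : β, Fintype.card {x // f x = b} = k := by
    intro b
    rw [← h b, Nat.card_eq_fintype_card]
  simp [this, Finset.sum_const, mul_comm]

lemma cardSub {K V : Type*} [Field K] [Fintype K] [AddCommGroup V] [Module K V] [Finite V]
    (U : Submodule K V) : Nat.card U = Fintype.card K ^ finrank K U := by
  classical
  cases nonempty_fintype V
  have : Fintype U := Fintype.ofFinite _
  rw [Nat.card_eq_fintype_card, card_eq_pow_finrank (K := K) (V := U)]

lemma cardDiff {K V : Type*} [Field K] [Fintype K] [AddCommGroup V] [Module K V] [Finite V]
    (U U' : Submodule K V) (h : U' ≤ U) :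
    Nat.card {x : V // x ∈ U ∧ x ∉ U'} =
      Fintype.card K ^ finrank K U - Fintype.card K ^ finrank K U' := by
  have e1 : Nat.card {x : V // x ∈ U ∧ x ∉ U'} = ((U : Set V) \ (U' : Set V)).ncard := by
    rw [← Nat.card_coe_set_eq]
    exact Nat.card_congr (Equiv.subtypeEquivRight (by intro x; simp [Set.mem_diff]))
  rw [e1, Set.ncard_diff (by exact_mod_cast h) (Set.toFinite _),
    ← Nat.card_coe_set_eq, ← Nat.card_coe_set_eq]
  rw [show Nat.card (U : Set V) = Nat.card U from rfl,
    show Nat.card (U' : Set V) = Nat.card U' from rfl, cardSub, cardSub]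

lemma cardSplit {α : Type*} [Finite α] (p s : α → Prop) :
    Nat.card {x // p x ∧ s x} + Nat.card {x // p x ∧ ¬ s x} = Nat.card {x // p x} := by
  classical
  have e : {x // p x} ≃ {x // p x ∧ s x} ⊕ {x // p x ∧ ¬ s x} :=
    (Equiv.sumCompl (fun x : {x // p x} => s x.1)).symm.trans
      (Equiv.sumCongr
        (Equiv.subtypeSubtypeEquivSubtypeInter p s)
        (Equiv.subtypeSubtypeEquivSubtypeInter p (fun x => ¬ s x)))
  rw [Nat.card_congr e, Nat.card_sum]

lemma finrankKer {K V : Type*} [Field K] [AddCommGroup V] [Module K V] [FiniteDimensional K V]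
    (f : V →ₗ[K] K) (hf : f ≠ 0) :
    finrank K (LinearMap.ker f) = finrank K V - 1 := by
  have h1 := LinearMap.finrank_range_add_finrank_ker f
  have h2 : LinearMap.range f = ⊤ := by
    rcases (DFunLike.ne_iff.1 hf) with ⟨x, hx⟩
    simp only [LinearMap.zero_apply] at hx
    rw [LinearMap.range_eq_top]
    intro c
    exact ⟨(c / f x) • x, by rw [map_smul, smul_eq_mul, div_mul_cancel₀ c hx]⟩
  rw [h2, finrank_top] at h1
  simp only [finrank_self] at h1
  omega

lemma exists_gen {K V : Type*} [Field K] [AddCommGroup V] [Module K V] [FiniteDimensional K V]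
    (L : Submodule K V) (hL : finrank K L = 1) :
    ∃ l : V, l ≠ 0 ∧ L = Submodule.span K {l} := by
  have hne : L ≠ ⊥ := by
    intro h
    rw [h, finrank_bot] at hL
    omega
  obtain ⟨l, hlL, hl0⟩ := Submodule.exists_mem_ne_zero_of_ne_bot hne
  refine ⟨l, hl0, ?_⟩
  refine (Submodule.eq_of_le_of_finrank_le
    ((Submodule.span_singleton_le_iff_mem _ _).2 hlL) ?_).symm
  rw [hL, finrank_span_singleton hl0]

lemma inf_span_bot {K V : Type*} [Field K] [AddCommGroup V] [Module K V]
    (U : Submodule K V) (w : V) (hw : w ∉ U) : U ⊓ Submodule.span K {w} = ⊥ := by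
  rw [eq_bot_iff]
  rintro x ⟨hxU, hxw⟩
  obtain ⟨c, rfl⟩ := Submodule.mem_span_singleton.1 hxw
  rcases eq_or_ne c 0 with rfl | hc
  · simp
  · refine absurd ?_ hw
    have h' := U.smul_mem c⁻¹ hxU
    rwa [smul_smul, inv_mul_cancel₀ hc, one_smul] at h'

lemma finrank_sup_span {K V : Type*} [Field K] [AddCommGroup V] [Module K V]
    [FiniteDimensional K V] (U : Submodule K V) (w : V) (hw : w ∉ U) :
    finrank K ↥(U ⊔ Submodule.span K {w}) = finrank K U + 1 := by
  have h := Submodule.finrank_sup_add_finrank_inf_eq U (Submodule.span K {w})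
  rw [inf_span_bot U w hw, finrank_bot, finrank_span_singleton
    (fun h0 => hw (by rw [h0]; exact U.zero_mem))] at h
  omega

lemma arithLemma (q k : ℕ) :
    q ^ (2 * k + 4) - q ^ (2 * k + 3) - (q ^ 2 - q) = (q ^ (2 * k + 2) - 1) * (q ^ 2 - q) := by
  have h1 : q ^ (2 * k + 4) = q ^ (2 * k + 2) * q ^ 2 := by ring
  have h2 : q ^ (2 * k + 3) = q ^ (2 * k + 2) * q := by ring
  rw [h1, h2, Nat.sub_mul, one_mul, Nat.mul_sub]

end Helpers

theorem stmt_7 {K V : Type*} [Field K] [Fintype K] [AddCommGroup V] [Module K V]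
    (q n : ℕ) (hq : Fintype.card K = q) (hn : 2 ≤ n)
    (hV : Module.finrank K V = 2 * n)
    (Ψ : LinearMap.BilinForm K V) (hΨ : Ψ.IsAlt) (hnd : Ψ.Nondegenerate)
    (S : Submodule K V) (hS2 : Module.finrank K S = 2)
    (hSnd : (Ψ.restrict S).Nondegenerate) :
    Nat.card {W : Submodule K V //
        Module.finrank K W = 2 ∧ (Ψ.restrict W).Nondegenerate ∧
        Module.finrank K ↥(S ⊔ W) = 3} =
      (q ^ (2 * n - 2) - 1) * (q + 1) := by
  classical
  have hq2 : 2 ≤ q := hq ▸ Fintype.one_lt_card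
  have hfd : FiniteDimensional K V := FiniteDimensional.of_finrank_pos (by omega)
  have hfin : Finite V := Module.finite_of_finite K
  have hsubfin : Finite (Submodule K V) :=
    Finite.of_injective _ (SetLike.coe_injective (A := Submodule K V))
  set LinesT := {L : Submodule K V // L ≤ S ∧ finrank K L = 1} with hLinesT
  set AT := {W : Submodule K V //
      finrank K W = 2 ∧ (Ψ.restrict W).Nondegenerate ∧ finrank K ↥(S ⊔ W) = 3} with hAT
  -- Step A : number of lines = q + 1
  have cardLines : Nat.card LinesT = q + 1 := by
    set μ : {x : V // x ∈ S ∧ x ∉ (⊥ : Submodule K V)} → LinesT := fun x =>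
      ⟨Submodule.span K {x.1},
        (Submodule.span_singleton_le_iff_mem _ _).2 x.2.1,
        finrank_span_singleton (by simpa using x.2.2)⟩ with hμ
    have key : Nat.card {x : V // x ∈ S ∧ x ∉ (⊥ : Submodule K V)} =
        Nat.card LinesT * (q - 1) := by
      refine fiberCount μ (q - 1) ?_
      intro L
      have e : {a // μ a = L} ≃ {x : V // x ∈ L.1 ∧ x ∉ (⊥ : Submodule K V)} := by
        refine ⟨fun a => ⟨a.1.1, ?_, a.1.2.2⟩, fun x => ⟨⟨x.1, L.2.1 x.2.1, x.2.2⟩, ?_⟩, ?_, ?_⟩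
        · have : (μ a.1).1 = L.1 := congrArg Subtype.val a.2
          simp only [hμ] at this
          rw [← this]
          exact Submodule.mem_span_singleton_self _
        · apply Subtype.ext
          simp only [hμ]
          refine Submodule.eq_of_le_of_finrank_le
            ((Submodule.span_singleton_le_iff_mem _ _).2 x.2.1) ?_
          rw [L.2.2, finrank_span_singleton (by simpa using x.2.2)]
        · intro a; apply Subtype.ext; apply Subtype.ext; rfl
        · intro x; apply Subtype.ext; rfl
      rw [Nat.card_congr e, cardDiff _ _ bot_le, L.2.2, finrank_bot, hq]
      simp
    rw [cardDiff _ _ bot_le, hS2, finrank_bot, hq] at key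
    have h2 : Nat.card LinesT * (q - 1) = (q + 1) * (q - 1) := by
      rw [← key]
      simp only [pow_zero]
      have h1 : 1 ≤ q := by omega
      have h1' : 1 ≤ q ^ 2 := Nat.one_le_pow _ _ (by omega)
      zify [h1, h1']
      ring
    exact Nat.eq_of_mul_eq_mul_right (by omega) h2
  -- the map from AT to lines
  have finrank_inf : ∀ W : AT, finrank K ↥(S ⊓ W.1) = 1 := by
    intro W
    have h := Submodule.finrank_sup_add_finrank_inf_eq S W.1
    rw [hS2, W.2.1, W.2.2.2] at h
    omega
  set φ : AT → LinesT := fun W => ⟨S ⊓ W.1, inf_le_left, finrank_inf W⟩ with hφ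
  -- Step B : each fiber of φ has cardinality q^(2n-2) - 1
  have cardFiber : ∀ L : LinesT, Nat.card {W : AT // φ W = L} = q ^ (2 * n - 2) - 1 := by
    intro L
    obtain ⟨l, hl0, hlspan⟩ := exists_gen L.1 L.2.2
    have hlL : l ∈ L.1 := hlspan ▸ Submodule.mem_span_singleton_self _
    have hlS : l ∈ S := L.2.1 hlL
    -- properties of W_w = L ⊔ span w for w with Ψ l w ≠ 0, w ∉ S
    have ψprop : ∀ w : V, Ψ l w ≠ 0 → w ∉ S →
        (finrank K ↥(L.1 ⊔ Submodule.span K {w}) = 2 ∧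
          (Ψ.restrict (L.1 ⊔ Submodule.span K {w})).Nondegenerate ∧
          finrank K ↥(S ⊔ (L.1 ⊔ Submodule.span K {w})) = 3) ∧
        S ⊓ (L.1 ⊔ Submodule.span K {w}) = L.1 := by
      intro w hw1 hw2
      have hwL : w ∉ L.1 := fun h => hw2 (L.2.1 h)
      have hdim : finrank K ↥(L.1 ⊔ Submodule.span K {w}) = 2 := by
        rw [finrank_sup_span L.1 w hwL, L.2.2]
      have hmem_decomp : ∀ x ∈ L.1 ⊔ Submodule.span K {w},
          ∃ a c : K, x = a • l + c • w := by
        intro x hx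
        obtain ⟨y, hy, z, hz, rfl⟩ := Submodule.mem_sup.1 hx
        rw [hlspan] at hy
        obtain ⟨a, rfl⟩ := Submodule.mem_span_singleton.1 hy
        obtain ⟨c, rfl⟩ := Submodule.mem_span_singleton.1 hz
        exact ⟨a, c, rfl⟩
      have hlW : l ∈ L.1 ⊔ Submodule.span K {w} := Submodule.mem_sup_left hlL
      have hwW : w ∈ L.1 ⊔ Submodule.span K {w} :=
        Submodule.mem_sup_right (Submodule.mem_span_singleton_self _)
      refine ⟨⟨hdim, ?_, ?_⟩, ?_⟩
      · -- nondegenerate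
        refine (LinearMap.IsRefl.nondegenerate_iff_separatingLeft
          (fun x y h => hΨ.isRefl x.1 y.1 h)).2 ?_
        intro x hx
        obtain ⟨a, c, hac⟩ := hmem_decomp x.1 x.2
        have h1 := hx ⟨l, hlW⟩
        have h2 := hx ⟨w, hwW⟩
        simp only [LinearMap.BilinForm.restrict_apply, LinearMap.domRestrict_apply, hac,
          map_add, map_smul, LinearMap.add_apply, LinearMap.smul_apply, smul_eq_mul] at h1 h2
        rw [← LinearMap.IsAlt.neg hΨ l w] at h1
        have hll : Ψ l l = 0 := hΨ l
        have hww : Ψ w w = 0 := hΨ w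
        have hc : c = 0 := by
          have h1' : c * Ψ l w = 0 := by linear_combination -h1 + a * hll
          rcases mul_eq_zero.1 h1' with h | h
          · exact h
          · exact absurd h hw1
        have ha : a = 0 := by
          have h2' : a * Ψ l w = 0 := by linear_combination h2 - c * hww
          rcases mul_eq_zero.1 h2' with h | h
          · exact h
          · exact absurd h hw1
        apply Subtype.ext
        simp [hac, ha, hc]
      · -- finrank (S ⊔ W) = 3
        have : S ⊔ (L.1 ⊔ Submodule.span K {w}) = S ⊔ Submodule.span K {w} := by
          rw [← sup_assoc, sup_eq_left.2 L.2.1]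
        rw [this, finrank_sup_span S w hw2, hS2]
      · -- S ⊓ W = L
        refine le_antisymm ?_ (le_inf L.2.1 le_sup_left)
        rintro x ⟨hxS, hxW⟩
        obtain ⟨y, hy, z, hz, rfl⟩ := Submodule.mem_sup.1 hxW
        obtain ⟨c, rfl⟩ := Submodule.mem_span_singleton.1 hz
        rcases eq_or_ne c 0 with rfl | hc
        · simpa using hy
        · exfalso
          apply hw2
          have : c • w ∈ S := by
            have := S.sub_mem hxS (L.2.1 hy)
            simpa using this
          have h' := S.smul_mem c⁻¹ this
          rwa [smul_smul, inv_mul_cancel₀ hc, one_smul] at h'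
    set ψ : {w : V // Ψ l w ≠ 0 ∧ w ∉ S} → {W : AT // φ W = L} := fun w =>
      ⟨⟨L.1 ⊔ Submodule.span K {w.1}, (ψprop w.1 w.2.1 w.2.2).1⟩,
        Subtype.ext (ψprop w.1 w.2.1 w.2.2).2⟩ with hψ
    have fibers : ∀ W : {W : AT // φ W = L},
        Nat.card {w // ψ w = W} = q ^ 2 - q := by
      intro W
      have hSW : S ⊓ W.1.1 = L.1 := congrArg Subtype.val W.2
      have hLW : L.1 ≤ W.1.1 := by rw [← hSW]; exact inf_le_right
      have hlW : l ∈ W.1.1 := hLW hlL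
      have key : ∀ x, x ∈ W.1.1 → x ∉ L.1 →
          Ψ l x ≠ 0 ∧ L.1 ⊔ Submodule.span K {x} = W.1.1 := by
        intro x hxW hxL
        have heq : L.1 ⊔ Submodule.span K {x} = W.1.1 := by
          refine Submodule.eq_of_le_of_finrank_le
            (sup_le hLW ((Submodule.span_singleton_le_iff_mem _ _).2 hxW)) ?_
          rw [finrank_sup_span L.1 x hxL, L.2.2, W.1.2.1]
        refine ⟨?_, heq⟩
        intro h0
        apply hl0
        have hvanish : ∀ y : W.1.1, Ψ.restrict W.1.1 ⟨l, hlW⟩ y = 0 := by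
          intro y
          have hy : y.1 ∈ L.1 ⊔ Submodule.span K {x} := by rw [heq]; exact y.2
          obtain ⟨y1, hy1, z, hz, hyz⟩ := Submodule.mem_sup.1 hy
          rw [hlspan] at hy1
          obtain ⟨a, rfl⟩ := Submodule.mem_span_singleton.1 hy1
          obtain ⟨c, rfl⟩ := Submodule.mem_span_singleton.1 hz
          show Ψ l y.1 = 0
          have hll : Ψ l l = 0 := hΨ l
          rw [← hyz, map_add, map_smul, map_smul, smul_eq_mul, smul_eq_mul, hll, h0]
          ring
        have := W.1.2.2.1.1 ⟨l, hlW⟩ hvanish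
        exact congrArg Subtype.val this
      have e : {w // ψ w = W} ≃ {x : V // x ∈ W.1.1 ∧ x ∉ L.1} := by
        refine ⟨fun w => ⟨w.1.1, ?_, fun h => w.1.2.2 (L.2.1 h)⟩,
          fun x => ⟨⟨x.1, (key x.1 x.2.1 x.2.2).1, ?_⟩, ?_⟩, ?_, ?_⟩
        · have : (ψ w.1).1.1 = W.1.1 := congrArg (fun a => a.1.1) w.2
          simp only [hψ] at this
          have hmem : w.1.1 ∈ L.1 ⊔ Submodule.span K {w.1.1} :=
            Submodule.mem_sup_right (Submodule.mem_span_singleton_self _)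
          rwa [this] at hmem
        · intro hxS
          have hmem : (x.1 : V) ∈ S ⊓ W.1.1 := ⟨hxS, x.2.1⟩
          rw [hSW] at hmem
          exact x.2.2 hmem
        · apply Subtype.ext
          apply Subtype.ext
          exact (key x.1 x.2.1 x.2.2).2
        · intro w; apply Subtype.ext; apply Subtype.ext; rfl
        · intro x; apply Subtype.ext; rfl
      rw [Nat.card_congr e, cardDiff _ _ hLW, W.1.2.1, L.2.2, hq, pow_one]
    have cardD : Nat.card {w : V // Ψ l w ≠ 0 ∧ w ∉ S} =
        (q ^ (2 * n) - q ^ (2 * n - 1)) - (q ^ 2 - q) := by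
      have hf : (Ψ l : V →ₗ[K] K) ≠ 0 := by
        intro h
        apply hl0
        apply hnd.1 l
        intro y
        rw [h]
        rfl
      have c1 : Nat.card {w : V // Ψ l w ≠ 0} = q ^ (2 * n) - q ^ (2 * n - 1) := by
        have e : {w : V // Ψ l w ≠ 0} ≃
            {w : V // w ∈ (⊤ : Submodule K V) ∧ w ∉ LinearMap.ker (Ψ l)} :=
          Equiv.subtypeEquivRight (by intro x; simp [LinearMap.mem_ker])
        rw [Nat.card_congr e, cardDiff _ _ le_top, finrank_top, finrankKer _ hf, hV, hq]
      have c2 : Nat.card {w : V // Ψ l w ≠ 0 ∧ w ∈ S} = q ^ 2 - q := by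
        set g : ↥S →ₗ[K] K := (Ψ l).domRestrict S with hg
        have hg0 : g ≠ 0 := by
          intro h
          apply hl0
          have : (⟨l, hlS⟩ : S) = 0 := by
            apply hSnd.1 ⟨l, hlS⟩
            intro y
            have : g y = 0 := by rw [h]; rfl
            simpa [hg] using this
          exact congrArg Subtype.val this
        have e : {w : V // Ψ l w ≠ 0 ∧ w ∈ S} ≃
            {y : ↥S // y ∈ (⊤ : Submodule K ↥S) ∧ y ∉ LinearMap.ker g} := by
          refine ⟨fun w => ⟨⟨w.1, w.2.2⟩, trivial, by simpa [hg, LinearMap.mem_ker] using w.2.1⟩,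
            fun y => ⟨y.1.1, by simpa [hg, LinearMap.mem_ker] using y.2.2, y.1.2⟩, ?_, ?_⟩
          · intro w; apply Subtype.ext; rfl
          · intro y; apply Subtype.ext; apply Subtype.ext; rfl
        have hfds : FiniteDimensional K ↥S := inferInstance
        have hfins : Finite ↥S := Module.finite_of_finite K
        rw [Nat.card_congr e, cardDiff _ _ le_top, finrank_top, finrankKer _ hg0, hS2, hq,
          pow_one]
      have split := cardSplit (fun w : V => Ψ l w ≠ 0) (fun w => w ∈ S)
      omega
    have main := fiberCount ψ (q ^ 2 - q) fibers
    rw [cardD] at main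
    have arith : (q ^ (2 * n) - q ^ (2 * n - 1)) - (q ^ 2 - q) =
        (q ^ (2 * n - 2) - 1) * (q ^ 2 - q) := by
      obtain ⟨k, rfl⟩ : ∃ k, n = k + 2 := ⟨n - 2, by omega⟩
      have e2 : 2 * (k + 2) - 1 = 2 * k + 3 := by omega
      have e3 : 2 * (k + 2) - 2 = 2 * k + 2 := by omega
      have e1 : 2 * (k + 2) = 2 * k + 4 := by omega
      rw [e2, e3, e1]
      exact arithLemma q k
    rw [arith] at main
    have hpos : 0 < q ^ 2 - q := by
      have : q < q ^ 2 := by nlinarith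
      omega
    exact Nat.eq_of_mul_eq_mul_right hpos main.symm
  have main : Nat.card AT = Nat.card LinesT * (q ^ (2 * n - 2) - 1) :=
    fiberCount φ _ cardFiber
  rw [main, cardLines, mul_comm]
end

section
/- Let V be a symplectic space of dimension 2n over F_q, n ≥ 2, and fix a 2-dimensional non-degenerate subspace S. Then the number of 2-dimensional non-degenerate subspaces W such that dim(S + W) = 4 and the restriction of the form to S + W is degenerate equals (q^{2n-2} − 1)(q^{2n-3} − q). -/
open Module Submodule

section Helpers

variable {K M : Type*} [Field K] [Fintype K] [AddCommGroup M] [Module K M]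

lemma helper_finite [FiniteDimensional K M] : Finite M := by
  exact Module.finite_of_finite K

lemma helper_card_module [FiniteDimensional K M] :
    Nat.card M = Fintype.card K ^ finrank K M := by
  haveI : Finite M := helper_finite (K := K)
  haveI : Fintype M := Fintype.ofFinite M
  rw [Nat.card_eq_fintype_card]
  exact card_eq_pow_finrank

lemma helper_card_not [Finite M] (P : M → Prop) :
    Nat.card {x : M // ¬ P x} = Nat.card M - Nat.card {x : M // P x} := by
  classical
  haveI : Fintype M := Fintype.ofFinite M
  simp only [Nat.card_eq_fintype_card]
  exact Fintype.card_subtype_compl P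

lemma helper_card_eq_zero [Finite M] : Nat.card {x : M // x = (0 : M)} = 1 := by
  haveI : Unique {x : M // x = (0 : M)} :=
    ⟨⟨⟨0, rfl⟩⟩, by rintro ⟨x, rfl⟩; rfl⟩
  exact Nat.card_unique

lemma helper_card_ne_zero [FiniteDimensional K M] :
    Nat.card {a : M // a ≠ 0} = Fintype.card K ^ finrank K M - 1 := by
  haveI : Finite M := helper_finite (K := K)
  rw [helper_card_not (fun a : M => a = 0), helper_card_module (K := K), helper_card_eq_zero]

lemma helper_pair_count [Finite M] (P : M → Prop) (Q : M → M → Prop) (c : ℕ)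
    (h : ∀ a, P a → Nat.card {b : M // Q a b} = c) :
    Nat.card {p : M × M // P p.1 ∧ Q p.1 p.2} = Nat.card {a : M // P a} * c := by
  classical
  haveI : Fintype M := Fintype.ofFinite M
  have e : {p : M × M // P p.1 ∧ Q p.1 p.2} ≃ Σ a : {a : M // P a}, {b : M // Q a.1 b} :=
    { toFun := fun x => ⟨⟨x.1.1, x.2.1⟩, ⟨x.1.2, x.2.2⟩⟩
      invFun := fun y => ⟨(y.1.1, y.2.1), y.1.2, y.2.2⟩
      left_inv := fun ⟨⟨a, b⟩, _, _⟩ => rfl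
      right_inv := fun ⟨⟨a, _⟩, ⟨b, _⟩⟩ => rfl }
  rw [Nat.card_congr e, Nat.card_eq_fintype_card, Fintype.card_sigma]
  have h' : ∀ a : {a : M // P a}, Fintype.card {b : M // Q a.1 b} = c := fun a => by
    rw [← Nat.card_eq_fintype_card]; exact h a.1 a.2
  calc (∑ a : {a : M // P a}, Fintype.card {b : M // Q a.1 b})
      = ∑ _a : {a : M // P a}, c := Finset.sum_congr rfl (fun a _ => h' a)
    _ = Fintype.card {a : M // P a} * c := by
        rw [Finset.sum_const, Finset.card_univ, smul_eq_mul]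
    _ = Nat.card {a : M // P a} * c := by rw [Nat.card_eq_fintype_card]

lemma helper_card_fiber {α β : Type*} [Finite α] [Finite β] (f : α → β) (c : ℕ)
    (h : ∀ b : β, Nat.card {a : α // f a = b} = c) : Nat.card α = Nat.card β * c := by
  classical
  haveI : Fintype α := Fintype.ofFinite α
  haveI : Fintype β := Fintype.ofFinite β
  rw [Nat.card_congr (Equiv.sigmaFiberEquiv f).symm, Nat.card_eq_fintype_card,
    Fintype.card_sigma]
  have h' : ∀ b : β, Fintype.card {a : α // f a = b} = c := fun b => by
    rw [← Nat.card_eq_fintype_card]; exact h b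
  calc (∑ b : β, Fintype.card {a : α // f a = b})
      = ∑ _b : β, c := Finset.sum_congr rfl (fun b _ => h' b)
    _ = Fintype.card β * c := by rw [Finset.sum_const, Finset.card_univ, smul_eq_mul]
    _ = Nat.card β * c := by rw [Nat.card_eq_fintype_card]

lemma helper_card_diff [FiniteDimensional K M] (N P : Submodule K M) (h : N ≤ P) :
    Nat.card {x : M // x ∈ P ∧ x ∉ N} =
      Fintype.card K ^ finrank K P - Fintype.card K ^ finrank K N := by
  classical
  haveI : Finite M := helper_finite (K := K)
  have e : {x : M // x ∈ P ∧ x ∉ N} ≃ {y : P // (y : M) ∉ N} :=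
    { toFun := fun x => ⟨⟨x.1, x.2.1⟩, x.2.2⟩
      invFun := fun y => ⟨(y.1 : M), y.1.2, y.2⟩
      left_inv := fun ⟨x, _, _⟩ => rfl
      right_inv := fun ⟨⟨y, _⟩, _⟩ => rfl }
  rw [Nat.card_congr e, helper_card_not (M := P) (fun y => (y : M) ∈ N)]
  have e2 : {y : P // (y : M) ∈ N} ≃ N :=
    { toFun := fun y => ⟨(y.1 : M), y.2⟩
      invFun := fun n => ⟨⟨(n : M), h n.2⟩, n.2⟩
      left_inv := fun ⟨⟨y, _⟩, _⟩ => rfl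
      right_inv := fun ⟨n, _⟩ => rfl }
  rw [Nat.card_congr e2, helper_card_module (K := K) (M := P), helper_card_module (K := K) (M := N)]

lemma helper_finrank_ker [FiniteDimensional K M] (f : M →ₗ[K] K) (hf : f ≠ 0) :
    finrank K (LinearMap.ker f) = finrank K M - 1 := by
  have h2 : LinearMap.range f ≠ ⊥ := by rwa [Ne, LinearMap.range_eq_bot]
  have h3 : finrank K (LinearMap.range f) ≤ 1 := by
    have := Submodule.finrank_le (LinearMap.range f)
    rwa [Module.finrank_self] at this
  have h4 : finrank K (LinearMap.range f) ≠ 0 := by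
    rwa [Ne, Submodule.finrank_eq_zero]
  have h5 := LinearMap.finrank_range_add_finrank_ker f
  omega

lemma helper_finrank_span_singleton_le [FiniteDimensional K M] (a : M) :
    finrank K (K ∙ a) ≤ 1 := by
  by_cases h : a = 0
  · subst h
    rw [Submodule.span_zero_singleton, finrank_bot]
    omega
  · rw [finrank_span_singleton h]

lemma helper_finrank_span_pair [FiniteDimensional K M] {a b : M} :
    finrank K (span K {a, b}) = 2 ↔ a ≠ 0 ∧ b ∉ (K ∙ a) := by
  constructor
  · intro h
    constructor
    · rintro rfl
      have hle : span K {(0 : M), b} ≤ K ∙ b := by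
        rw [span_le]
        rintro x hx
        simp only [Set.mem_insert_iff, Set.mem_singleton_iff] at hx
        rcases hx with rfl | h
        · exact zero_mem _
        · rw [h]; exact mem_span_singleton_self b
      have := (Submodule.finrank_mono hle).trans (helper_finrank_span_singleton_le b)
      omega
    · intro hb
      have hle : span K {a, b} ≤ K ∙ a := by
        rw [span_le]
        rintro x hx
        simp only [Set.mem_insert_iff, Set.mem_singleton_iff] at hx
        rcases hx with h | h
        · rw [h]; exact mem_span_singleton_self a
        · rw [h]; exact hb
      have := (Submodule.finrank_mono hle).trans (helper_finrank_span_singleton_le a)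
      omega
  · rintro ⟨ha, hb⟩
    have h1 : (K ∙ a) < span K {a, b} := by
      refine lt_of_le_of_ne (span_mono (by simp)) (fun he => hb ?_)
      rw [he]
      exact subset_span (by simp)
    have h2 : 1 < finrank K (span K {a, b}) := by
      have := Submodule.finrank_lt_finrank_of_lt h1
      rwa [finrank_span_singleton ha] at this
    have h3 : finrank K (span K {a, b}) ≤ 2 := by
      have hsp : span K {a, b} = (K ∙ a) ⊔ (K ∙ b) := by
        exact span_insert a {b}
      have h4 := Submodule.finrank_sup_add_finrank_inf_eq (K := K) (V := M) (K ∙ a) (K ∙ b)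
      have h5 := helper_finrank_span_singleton_le (K := K) a
      have h6 := helper_finrank_span_singleton_le (K := K) b
      rw [hsp]
      omega
    omega

lemma helper_span_top [FiniteDimensional K M] (hM : finrank K M = 2) (a b : M) :
    span K {a, b} = ⊤ ↔ a ≠ 0 ∧ b ∉ (K ∙ a) := by
  rw [← helper_finrank_span_pair]
  constructor
  · intro h; rw [h, finrank_top]; exact hM
  · intro h; exact Submodule.eq_top_of_finrank_eq (by rw [h, hM])

lemma helper_span_pair_subtype [FiniteDimensional K M] {W : Submodule K M} (a b : ↥W) :
    span K {a, b} = ⊤ ↔ span K {(a : M), (b : M)} = W := by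
  constructor
  · intro h
    have h2 := congrArg (Submodule.map W.subtype) h
    simpa only [Submodule.map_span, Set.image_insert_eq, Set.image_singleton,
      Submodule.map_subtype_top, Submodule.coe_subtype] using h2
  · intro h
    apply Submodule.map_injective_of_injective W.injective_subtype
    simpa only [Submodule.map_span, Set.image_insert_eq, Set.image_singleton,
      Submodule.map_subtype_top, Submodule.coe_subtype] using h

lemma helper_count_bases [FiniteDimensional K M] (hM : finrank K M = 2) :
    Nat.card {p : M × M // span K {p.1, p.2} = ⊤} =
      (Fintype.card K ^ 2 - 1) * (Fintype.card K ^ 2 - Fintype.card K) := by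
  haveI : Finite M := helper_finite (K := K)
  rw [Nat.card_congr (Equiv.subtypeEquivRight (fun p : M × M => helper_span_top hM p.1 p.2)),
    helper_pair_count (fun a : M => a ≠ 0) (fun a b => b ∉ (K ∙ a))
      (Fintype.card K ^ 2 - Fintype.card K) ?_]
  · rw [helper_card_ne_zero (K := K), hM]
  · intro a ha
    rw [helper_card_not (fun b : M => b ∈ (K ∙ a))]
    have h1 : Nat.card {b : M // b ∈ (K ∙ a)} = Fintype.card K := by
      have h2 := helper_card_module (K := K) (M := ↥(K ∙ a))
      rw [finrank_span_singleton ha, pow_one] at h2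
      exact h2
    rw [h1, helper_card_module (K := K), hM]

lemma helper_count_Q [FiniteDimensional K M] (B : LinearMap.BilinForm K M)
    (hB : B.Nondegenerate) (hM : finrank K M = 2) :
    Nat.card {p : M × M // B p.1 p.2 ≠ 0} =
      (Fintype.card K ^ 2 - 1) * (Fintype.card K ^ 2 - Fintype.card K) := by
  haveI : Finite M := helper_finite (K := K)
  have e : ∀ p : M × M, (B p.1 p.2 ≠ 0) ↔ (p.1 ≠ 0 ∧ B p.1 p.2 ≠ 0) := fun p =>
    ⟨fun h => ⟨fun h0 => h (by rw [h0]; simp), h⟩, fun h => h.2⟩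
  rw [Nat.card_congr (Equiv.subtypeEquivRight e),
    helper_pair_count (fun a : M => a ≠ 0) (fun a b => B a b ≠ 0)
      (Fintype.card K ^ 2 - Fintype.card K) ?_]
  · rw [helper_card_ne_zero (K := K), hM]
  · intro a ha
    have hfa : (B a) ≠ 0 := fun h => ha (hB.1 a (fun n => by simp [h]))
    rw [helper_card_not (fun b : M => B a b = 0)]
    have h1 : Nat.card {b : M // B a b = 0} = Fintype.card K := by
      rw [Nat.card_congr (Equiv.subtypeEquivRight
        (fun b : M => (LinearMap.mem_ker (f := B a)).symm))]
      have h2 := helper_card_module (K := K) (M := ↥(LinearMap.ker (B a)))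
      rw [helper_finrank_ker (B a) hfa, hM] at h2
      simpa using h2
    rw [h1, helper_card_module (K := K), hM]

lemma helper_count_R [FiniteDimensional K M] (B : LinearMap.BilinForm K M)
    (hB : B.Nondegenerate) (halt : B.IsAlt) :
    Nat.card {p : M × M // p.1 ≠ 0 ∧ (B p.1 p.2 = 0 ∧ p.2 ∉ (K ∙ p.1))} =
      (Fintype.card K ^ finrank K M - 1) *
        (Fintype.card K ^ (finrank K M - 1) - Fintype.card K) := by
  haveI : Finite M := helper_finite (K := K)
  rw [helper_pair_count (fun a : M => a ≠ 0) (fun a b => B a b = 0 ∧ b ∉ (K ∙ a))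
    (Fintype.card K ^ (finrank K M - 1) - Fintype.card K) ?_]
  · rw [helper_card_ne_zero (K := K)]
  · intro a ha
    have hfa : (B a) ≠ 0 := fun h => ha (hB.1 a (fun n => by simp [h]))
    have hle : (K ∙ a) ≤ LinearMap.ker (B a) := by
      rintro x hx
      rcases mem_span_singleton.1 hx with ⟨c, rfl⟩
      simp [LinearMap.mem_ker, halt a]
    have e : ∀ b : M, (B a b = 0 ∧ b ∉ (K ∙ a)) ↔ (b ∈ LinearMap.ker (B a) ∧ b ∉ (K ∙ a)) := by
      intro b
      rw [LinearMap.mem_ker]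
    rw [Nat.card_congr (Equiv.subtypeEquivRight e), helper_card_diff (K := K) _ _ hle,
      helper_finrank_ker (B a) hfa, finrank_span_singleton ha, pow_one]

end Helpers
theorem stmt_8 {K V : Type*} [Field K] [Fintype K] [AddCommGroup V] [Module K V]
    (q n : ℕ) (hq : Fintype.card K = q) (hn : 2 ≤ n)
    (hV : Module.finrank K V = 2 * n)
    (Ψ : LinearMap.BilinForm K V) (hΨ : Ψ.IsAlt) (hnd : Ψ.Nondegenerate)
    (S : Submodule K V) (hS2 : Module.finrank K S = 2)
    (hSnd : (Ψ.restrict S).Nondegenerate) :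
    Nat.card {W : Submodule K V //
        Module.finrank K W = 2 ∧ (Ψ.restrict W).Nondegenerate ∧
        Module.finrank K ↥(S ⊔ W) = 4 ∧ (S ⊔ W) ⊓ Ψ.orthogonal (S ⊔ W) ≠ ⊥} =
      (q ^ (2 * n - 2) - 1) * (q ^ (2 * n - 3) - q) := by
  classical
  subst hq
  haveI hfd : FiniteDimensional K V := FiniteDimensional.of_finrank_pos (by rw [hV]; omega)
  haveI : Finite V := helper_finite (K := K)
  haveI : Finite (Submodule K V) :=
    Finite.of_injective (fun W : Submodule K V => (W : Set V)) SetLike.coe_injective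
  have hrefl : Ψ.IsRefl := hΨ.isRefl
  set S' : Submodule K V := Ψ.orthogonal S with hS'def
  have hcompl : IsCompl S S' := Ψ.isCompl_orthogonal_of_restrict_nondegenerate hrefl hSnd
  have hS'rank : Module.finrank K S' = 2 * n - 2 := by
    rw [hS'def, LinearMap.BilinForm.finrank_orthogonal hnd, hV, hS2]
  have hS'nd : (Ψ.restrict S').Nondegenerate := by
    rw [LinearMap.BilinForm.restrict_nondegenerate_iff_isCompl_orthogonal hrefl, hS'def,
      Ψ.orthogonal_orthogonal hnd hrefl]
    exact hcompl.symm
  have hS'alt : (Ψ.restrict S').IsAlt := fun x => hΨ x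
  set πs : V →ₗ[K] ↥S := S.projectionOnto S' hcompl with hπsdef
  set πt : V →ₗ[K] ↥S' := S'.projectionOnto S hcompl.symm with hπtdef
  have hadd : ∀ v : V, ((πs v : V) + (πt v : V)) = v := fun v =>
    Submodule.projection_add_projection_eq_self hcompl v
  have horth : ∀ s t : V, s ∈ S → t ∈ S' → Ψ s t = 0 := fun s t hs ht => ht s hs
  have horth' : ∀ t s : V, t ∈ S' → s ∈ S → Ψ t s = 0 := fun t s ht hs =>
    hrefl _ _ (horth s t hs ht)
  have hπs_add : ∀ (s : ↥S) (t : ↥S'), πs ((s : V) + (t : V)) = s := fun s t => by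
    rw [map_add, hπsdef, Submodule.projectionOnto_apply_left hcompl,
      Submodule.projectionOnto_apply_right hcompl, add_zero]
  have hπt_add : ∀ (s : ↥S) (t : ↥S'), πt ((s : V) + (t : V)) = t := fun s t => by
    rw [map_add, hπtdef, Submodule.projectionOnto_apply_right hcompl.symm,
      Submodule.projectionOnto_apply_left hcompl.symm, zero_add]
  have hresS : ∀ x y : ↥S, (Ψ.restrict S) x y = Ψ (x : V) (y : V) := fun x y => rfl
  have hresS' : ∀ x y : ↥S', (Ψ.restrict S') x y = Ψ (x : V) (y : V) := fun x y => rfl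
  have hsplit : ∀ w1 w2 : V,
      Ψ w1 w2 = Ψ (πs w1 : V) (πs w2 : V) + Ψ (πt w1 : V) (πt w2 : V) := by
    intro w1 w2
    conv_lhs => rw [← hadd w1, ← hadd w2]
    simp only [map_add, LinearMap.add_apply]
    rw [horth _ _ (πs w1).2 (πt w2).2, horth' _ _ (πt w1).2 (πs w2).2]
    ring
  -- the key equivalence
  have key : ∀ w1 w2 : V,
      ((Ψ.restrict S) (πs w1) (πs w2) ≠ 0 ∧
        (πt w1 ≠ 0 ∧ ((Ψ.restrict S') (πt w1) (πt w2) = 0 ∧ πt w2 ∉ (Submodule.span K {πt w1})))) ↔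
      (Module.finrank K ↥(Submodule.span K {w1, w2}) = 2 ∧
        (Ψ.restrict (Submodule.span K {w1, w2})).Nondegenerate ∧
        Module.finrank K ↥(S ⊔ Submodule.span K {w1, w2}) = 4 ∧
        (S ⊔ Submodule.span K {w1, w2}) ⊓ Ψ.orthogonal (S ⊔ Submodule.span K {w1, w2}) ≠ ⊥) := by
    intro w1 w2
    have hs1 : (πs w1 : V) ∈ S := (πs w1).2
    have hs2 : (πs w2 : V) ∈ S := (πs w2).2
    have ht1 : (πt w1 : V) ∈ S' := (πt w1).2
    have ht2 : (πt w2 : V) ∈ S' := (πt w2).2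
    have hw1 : (πs w1 : V) + (πt w1 : V) = w1 := hadd w1
    have hw2 : (πs w2 : V) + (πt w2 : V) = w2 := hadd w2
    have hsupT : S ⊔ Submodule.span K {w1, w2}
        = S ⊔ Submodule.span K {(πt w1 : V), (πt w2 : V)} := by
      apply le_antisymm
      · apply sup_le le_sup_left
        rw [Submodule.span_le]
        rintro x hx
        simp only [Set.mem_insert_iff, Set.mem_singleton_iff] at hx
        rcases hx with h | h
        · rw [h]
          have hmm := add_mem (Submodule.mem_sup_left hs1)
            (Submodule.mem_sup_right (Submodule.subset_span
              (show (πt w1 : V) ∈ ({(πt w1 : V), (πt w2 : V)} : Set V) by simp)))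
          rwa [hw1] at hmm
        · rw [h]
          have hmm := add_mem (Submodule.mem_sup_left hs2)
            (Submodule.mem_sup_right (Submodule.subset_span
              (show (πt w2 : V) ∈ ({(πt w1 : V), (πt w2 : V)} : Set V) by simp)))
          rwa [hw2] at hmm
      · apply sup_le le_sup_left
        rw [Submodule.span_le]
        rintro x hx
        simp only [Set.mem_insert_iff, Set.mem_singleton_iff] at hx
        rcases hx with h | h
        · rw [h, eq_sub_of_add_eq' hw1]
          exact sub_mem (Submodule.mem_sup_right (Submodule.subset_span
              (show w1 ∈ ({w1, w2} : Set V) by simp)))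
            (Submodule.mem_sup_left hs1)
        · rw [h, eq_sub_of_add_eq' hw2]
          exact sub_mem (Submodule.mem_sup_right (Submodule.subset_span
              (show w2 ∈ ({w1, w2} : Set V) by simp)))
            (Submodule.mem_sup_left hs2)
    have hTle : Submodule.span K {(πt w1 : V), (πt w2 : V)} ≤ S' := by
      rw [Submodule.span_le]
      rintro x hx
      simp only [Set.mem_insert_iff, Set.mem_singleton_iff] at hx
      rcases hx with h | h
      · rw [h]; exact ht1
      · rw [h]; exact ht2
    have hdisjT : S ⊓ Submodule.span K {(πt w1 : V), (πt w2 : V)} = ⊥ :=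
      (hcompl.disjoint.mono_right hTle).eq_bot
    have hrank4 : Module.finrank K ↥(S ⊔ Submodule.span K {w1, w2}) = 4 ↔
        Module.finrank K ↥(Submodule.span K {(πt w1 : V), (πt w2 : V)}) = 2 := by
      rw [hsupT]
      have h4 := Submodule.finrank_sup_add_finrank_inf_eq (K := K) (V := V) S
        (Submodule.span K {(πt w1 : V), (πt w2 : V)})
      rw [hdisjT, finrank_bot, hS2] at h4
      omega
    have htpair : Module.finrank K ↥(Submodule.span K {(πt w1 : V), (πt w2 : V)}) = 2 ↔
        ((πt w1 : V) ≠ 0 ∧ (πt w2 : V) ∉ (Submodule.span K {(πt w1 : V)})) :=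
      helper_finrank_span_pair (K := K)
    have hne_coe : πt w1 ≠ 0 ↔ (πt w1 : V) ≠ 0 :=
      not_congr (ZeroMemClass.coe_eq_zero).symm
    have hsp_coe : πt w2 ∉ (Submodule.span K {πt w1}) ↔
        (πt w2 : V) ∉ (Submodule.span K {(πt w1 : V)}) := by
      apply not_congr
      simp only [Submodule.mem_span_singleton]
      constructor
      · rintro ⟨c, hc⟩
        refine ⟨c, ?_⟩
        rw [← hc]
        simp
      · rintro ⟨c, hc⟩
        refine ⟨c, Subtype.ext ?_⟩
        simpa using hc
    have hw1ne : (πt w1 : V) ≠ 0 → w1 ≠ 0 := by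
      intro ht1ne h
      apply ht1ne
      rw [h, map_zero]
      simp
    have hrad : (πt w1 : V) ≠ 0 → (Ψ (πt w1 : V) (πt w2 : V) = 0 ↔
        (S ⊔ Submodule.span K {w1, w2}) ⊓ Ψ.orthogonal (S ⊔ Submodule.span K {w1, w2}) ≠ ⊥) := by
      intro ht1ne
      rw [hsupT]
      constructor
      · intro h0
        refine (Submodule.ne_bot_iff _).2 ⟨(πt w1 : V), ?_, ht1ne⟩
        refine Submodule.mem_inf.2
          ⟨Submodule.mem_sup_right (Submodule.subset_span (by simp)), ?_⟩
        intro u hu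
        rcases Submodule.mem_sup.1 hu with ⟨y, hy, z, hz, rfl⟩
        rcases Submodule.mem_span_pair.1 hz with ⟨a, b, rfl⟩
        show Ψ (y + (a • (πt w1 : V) + b • (πt w2 : V))) (πt w1 : V) = 0
        have h1 : Ψ y (πt w1 : V) = 0 := horth _ _ hy ht1
        have h2 : Ψ (πt w2 : V) (πt w1 : V) = 0 := hrefl _ _ h0
        rw [map_add, LinearMap.add_apply, h1, map_add, LinearMap.add_apply,
          map_smul, map_smul, LinearMap.smul_apply, LinearMap.smul_apply,
          hΨ ((πt w1 : V)), h2, smul_zero, smul_zero, add_zero, add_zero]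
      · intro hne
        by_contra h0
        apply hne
        rw [eq_bot_iff]
        rintro x hx
        obtain ⟨hxU, hxO⟩ := Submodule.mem_inf.1 hx
        obtain ⟨y, hy, z, hz, rfl⟩ := Submodule.mem_sup.1 hxU
        obtain ⟨a, b, rfl⟩ := Submodule.mem_span_pair.1 hz
        have hzS' : a • (πt w1 : V) + b • (πt w2 : V) ∈ S' :=
          add_mem (Submodule.smul_mem _ _ ht1) (Submodule.smul_mem _ _ ht2)
        have hy0 : y = 0 := by
          have hyS : ∀ m : ↥S, (Ψ.restrict S) ⟨y, hy⟩ m = 0 := by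
            intro m
            have hu : Ψ (m : V) (y + (a • (πt w1 : V) + b • (πt w2 : V))) = 0 :=
              hxO (m : V) (Submodule.mem_sup_left m.2)
            have hz0 : Ψ (m : V) (a • (πt w1 : V) + b • (πt w2 : V)) = 0 :=
              horth _ _ m.2 hzS'
            rw [map_add, hz0, add_zero] at hu
            rw [hresS]
            exact hrefl _ _ hu
          have h := hSnd.1 ⟨y, hy⟩ hyS
          exact Subtype.ext_iff.1 h
        have ht1U : (πt w1 : V) ∈ S ⊔ Submodule.span K {(πt w1 : V), (πt w2 : V)} :=
          Submodule.mem_sup_right (Submodule.subset_span (by simp))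
        have ht2U : (πt w2 : V) ∈ S ⊔ Submodule.span K {(πt w1 : V), (πt w2 : V)} :=
          Submodule.mem_sup_right (Submodule.subset_span (by simp))
        have hb : b = 0 := by
          have h1 : Ψ (πt w1 : V) (y + (a • (πt w1 : V) + b • (πt w2 : V))) = 0 := hxO _ ht1U
          rw [hy0, zero_add, map_add, map_smul, map_smul, hΨ ((πt w1 : V)),
            smul_zero, zero_add, smul_eq_mul] at h1
          exact (mul_eq_zero.1 h1).resolve_right h0
        have ha : a = 0 := by
          have h1 : Ψ (πt w2 : V) (y + (a • (πt w1 : V) + b • (πt w2 : V))) = 0 := hxO _ ht2U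
          rw [hy0, zero_add, map_add, map_smul, map_smul, hΨ ((πt w2 : V)),
            smul_zero, add_zero, smul_eq_mul] at h1
          have h3 : Ψ (πt w2 : V) (πt w1 : V) ≠ 0 := fun hz =>
            h0 (neg_eq_zero.1 ((LinearMap.IsAlt.neg hΨ _ _).trans hz))
          exact (mul_eq_zero.1 h1).resolve_right h3
        rw [hy0, ha, hb]
        simp
    have hnd_iff : (πt w1 : V) ≠ 0 →
        ((Ψ.restrict (Submodule.span K {w1, w2})).Nondegenerate ↔ Ψ w1 w2 ≠ 0) := by
      intro ht1ne
      constructor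
      · intro hndW hc0
        have hmem : w1 ∈ Submodule.span K {w1, w2} := Submodule.subset_span (by simp)
        refine hw1ne ht1ne (Subtype.ext_iff.1 (hndW.1 ⟨w1, hmem⟩ ?_))
        rintro ⟨x, hx⟩
        obtain ⟨a, b, rfl⟩ := Submodule.mem_span_pair.1 hx
        show Ψ w1 (a • w1 + b • w2) = 0
        rw [map_add, map_smul, map_smul, hΨ w1, hc0, smul_zero, smul_zero, add_zero]
      · intro hcne
        refine (LinearMap.IsRefl.nondegenerate_iff_separatingLeft
          (B := Ψ.restrict (Submodule.span K {w1, w2})) (fun x y h => hrefl _ _ h)).2 ?_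
        intro x hx0
        obtain ⟨x, hx⟩ := x
        obtain ⟨a, b, hab⟩ := Submodule.mem_span_pair.1 hx
        have h1 : Ψ x w1 = 0 := hx0 ⟨w1, Submodule.subset_span (by simp)⟩
        have h2 : Ψ x w2 = 0 := hx0 ⟨w2, Submodule.subset_span (by simp)⟩
        rw [← hab] at h1 h2
        have e1 : Ψ (a • w1 + b • w2) w1 = b * Ψ w2 w1 := by
          rw [map_add, LinearMap.add_apply, map_smul, map_smul, LinearMap.smul_apply,
            LinearMap.smul_apply, hΨ w1, smul_zero, zero_add, smul_eq_mul]
        have e2 : Ψ (a • w1 + b • w2) w2 = a * Ψ w1 w2 := by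
          rw [map_add, LinearMap.add_apply, map_smul, map_smul, LinearMap.smul_apply,
            LinearMap.smul_apply, hΨ w2, smul_zero, add_zero, smul_eq_mul]
        rw [e1] at h1
        rw [e2] at h2
        have hb : b = 0 := by
          have h3 : Ψ w2 w1 ≠ 0 := fun hz =>
            hcne (neg_eq_zero.1 ((LinearMap.IsAlt.neg hΨ _ _).trans hz))
          exact (mul_eq_zero.1 h1).resolve_right h3
        have ha : a = 0 := (mul_eq_zero.1 h2).resolve_right hcne
        apply Subtype.ext
        show x = 0
        rw [← hab, ha, hb]
        simp
    constructor
    · rintro ⟨hQ, ht1ne', hB0', htsp'⟩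
      have ht1ne : (πt w1 : V) ≠ 0 := hne_coe.1 ht1ne'
      have htsp : (πt w2 : V) ∉ (Submodule.span K {(πt w1 : V)}) := hsp_coe.1 htsp'
      have hB0 : Ψ (πt w1 : V) (πt w2 : V) = 0 := by rw [← hresS']; exact hB0'
      have hQ' : Ψ (πs w1 : V) (πs w2 : V) ≠ 0 := by rw [← hresS]; exact hQ
      have hw12 : Ψ w1 w2 ≠ 0 := by rw [hsplit w1 w2, hB0, add_zero]; exact hQ'
      refine ⟨?_, (hnd_iff ht1ne).2 hw12, hrank4.2 (htpair.2 ⟨ht1ne, htsp⟩),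
        (hrad ht1ne).1 hB0⟩
      apply (helper_finrank_span_pair (K := K)).2
      refine ⟨hw1ne ht1ne, ?_⟩
      intro hmem
      rcases Submodule.mem_span_singleton.1 hmem with ⟨c, hc⟩
      apply htsp
      refine Submodule.mem_span_singleton.2 ⟨c, ?_⟩
      have he : πt w2 = c • πt w1 := by rw [← hc, map_smul]
      rw [he]
      simp
    · rintro ⟨hfr2, hndW, hfr4, hradne⟩
      obtain ⟨ht1ne, htsp⟩ := htpair.1 (hrank4.1 hfr4)
      have hB0 : Ψ (πt w1 : V) (πt w2 : V) = 0 := (hrad ht1ne).2 hradne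
      have hw12 : Ψ w1 w2 ≠ 0 := (hnd_iff ht1ne).1 hndW
      have hQ' : Ψ (πs w1 : V) (πs w2 : V) ≠ 0 := by
        intro h
        apply hw12
        rw [hsplit w1 w2, h, hB0, add_zero]
      refine ⟨by rw [hresS]; exact hQ', hne_coe.2 ht1ne, by rw [hresS']; exact hB0,
        hsp_coe.2 htsp⟩
  -- the map from pairs to subspaces
  let φ : {p : V × V // (Ψ.restrict S) (πs p.1) (πs p.2) ≠ 0 ∧
        (πt p.1 ≠ 0 ∧ ((Ψ.restrict S') (πt p.1) (πt p.2) = 0 ∧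
          πt p.2 ∉ (Submodule.span K {πt p.1})))} →
      {W : Submodule K V // Module.finrank K W = 2 ∧ (Ψ.restrict W).Nondegenerate ∧
        Module.finrank K ↥(S ⊔ W) = 4 ∧ (S ⊔ W) ⊓ Ψ.orthogonal (S ⊔ W) ≠ ⊥} :=
    fun p => ⟨Submodule.span K {p.1.1, p.1.2}, (key p.1.1 p.1.2).1 p.2⟩
  have hfiber : ∀ Wx : {W : Submodule K V // Module.finrank K W = 2 ∧
      (Ψ.restrict W).Nondegenerate ∧ Module.finrank K ↥(S ⊔ W) = 4 ∧
      (S ⊔ W) ⊓ Ψ.orthogonal (S ⊔ W) ≠ ⊥},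
      Nat.card {p // φ p = Wx} =
        (Fintype.card K ^ 2 - 1) * (Fintype.card K ^ 2 - Fintype.card K) := by
    intro Wx
    have e1 : {p // φ p = Wx} ≃
        {p : V × V // Submodule.span K {p.1, p.2} = Wx.1} :=
      { toFun := fun p => ⟨p.1.1, congrArg Subtype.val p.2⟩
        invFun := fun r => ⟨⟨r.1, (key r.1.1 r.1.2).2 (by rw [r.2]; exact Wx.2)⟩,
          Subtype.ext r.2⟩
        left_inv := fun p => rfl
        right_inv := fun r => rfl }
    have hm : ∀ r : {p : V × V // Submodule.span K {p.1, p.2} = Wx.1},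
        r.1.1 ∈ Wx.1 ∧ r.1.2 ∈ Wx.1 := by
      intro r
      constructor
      · have h := Submodule.subset_span (R := K) (show r.1.1 ∈ ({r.1.1, r.1.2} : Set V) by simp)
        rwa [r.2] at h
      · have h := Submodule.subset_span (R := K) (show r.1.2 ∈ ({r.1.1, r.1.2} : Set V) by simp)
        rwa [r.2] at h
    have e2 : {p : V × V // Submodule.span K {p.1, p.2} = Wx.1} ≃
        {z : ↥Wx.1 × ↥Wx.1 // Submodule.span K {z.1, z.2} = ⊤} :=
      { toFun := fun r => ⟨(⟨r.1.1, (hm r).1⟩, ⟨r.1.2, (hm r).2⟩),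
          (helper_span_pair_subtype _ _).2 r.2⟩
        invFun := fun z => ⟨((z.1.1 : V), (z.1.2 : V)),
          (helper_span_pair_subtype _ _).1 z.2⟩
        left_inv := fun r => rfl
        right_inv := fun z => rfl }
    rw [Nat.card_congr (e1.trans e2)]
    exact helper_count_bases (K := K) Wx.2.1
  have hcardPP : Nat.card {p : V × V // (Ψ.restrict S) (πs p.1) (πs p.2) ≠ 0 ∧
        (πt p.1 ≠ 0 ∧ ((Ψ.restrict S') (πt p.1) (πt p.2) = 0 ∧
          πt p.2 ∉ (Submodule.span K {πt p.1})))} =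
      Nat.card {W : Submodule K V // Module.finrank K W = 2 ∧ (Ψ.restrict W).Nondegenerate ∧
        Module.finrank K ↥(S ⊔ W) = 4 ∧ (S ⊔ W) ⊓ Ψ.orthogonal (S ⊔ W) ≠ ⊥} *
        ((Fintype.card K ^ 2 - 1) * (Fintype.card K ^ 2 - Fintype.card K)) :=
    helper_card_fiber φ _ hfiber
  -- second computation
  have ePPQR : {p : V × V // (Ψ.restrict S) (πs p.1) (πs p.2) ≠ 0 ∧
        (πt p.1 ≠ 0 ∧ ((Ψ.restrict S') (πt p.1) (πt p.2) = 0 ∧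
          πt p.2 ∉ (Submodule.span K {πt p.1})))} ≃
      {z : ↥S × ↥S // (Ψ.restrict S) z.1 z.2 ≠ 0} ×
      {z : ↥S' × ↥S' // z.1 ≠ 0 ∧ ((Ψ.restrict S') z.1 z.2 = 0 ∧
        z.2 ∉ (Submodule.span K {z.1}))} :=
    { toFun := fun p => (⟨(πs p.1.1, πs p.1.2), p.2.1⟩, ⟨(πt p.1.1, πt p.1.2), p.2.2⟩)
      invFun := fun z => ⟨((z.1.1.1 : V) + (z.2.1.1 : V), (z.1.1.2 : V) + (z.2.1.2 : V)), by
        refine ⟨?_, ?_, ?_, ?_⟩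
        · rw [hπs_add, hπs_add]; exact z.1.2
        · rw [hπt_add]; exact z.2.2.1
        · rw [hπt_add, hπt_add]; exact z.2.2.2.1
        · rw [hπt_add, hπt_add]; exact z.2.2.2.2⟩
      left_inv := fun p => by
        obtain ⟨⟨w1, w2⟩, hp⟩ := p
        apply Subtype.ext
        simp only [Prod.ext_iff]
        exact ⟨hadd w1, hadd w2⟩
      right_inv := fun z => by
        obtain ⟨⟨⟨s1, s2⟩, hz1⟩, ⟨⟨t1, t2⟩, hz2⟩⟩ := z
        simp only [Prod.ext_iff, Subtype.ext_iff]
        exact ⟨⟨congrArg Subtype.val (hπs_add s1 t1), congrArg Subtype.val (hπs_add s2 t2)⟩,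
          ⟨congrArg Subtype.val (hπt_add s1 t1), congrArg Subtype.val (hπt_add s2 t2)⟩⟩ }
  have hcardPP2 : Nat.card {p : V × V // (Ψ.restrict S) (πs p.1) (πs p.2) ≠ 0 ∧
        (πt p.1 ≠ 0 ∧ ((Ψ.restrict S') (πt p.1) (πt p.2) = 0 ∧
          πt p.2 ∉ (Submodule.span K {πt p.1})))} =
      ((Fintype.card K ^ 2 - 1) * (Fintype.card K ^ 2 - Fintype.card K)) *
        ((Fintype.card K ^ (2 * n - 2) - 1) * (Fintype.card K ^ (2 * n - 3) - Fintype.card K)) := by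
    rw [Nat.card_congr ePPQR, Nat.card_prod]
    congr 1
    · exact helper_count_Q (K := K) (Ψ.restrict S) hSnd hS2
    · have h := helper_count_R (K := K) (Ψ.restrict S') hS'nd hS'alt
      rw [hS'rank] at h
      have harith : 2 * n - 2 - 1 = 2 * n - 3 := by omega
      rw [harith] at h
      exact h
  have hq2 : 1 < Fintype.card K := Fintype.one_lt_card
  have hq7 : Fintype.card K < Fintype.card K ^ 2 := by
    calc Fintype.card K = 1 * Fintype.card K := (one_mul _).symm
      _ < Fintype.card K * Fintype.card K :=
          mul_lt_mul_of_pos_right hq2 (by omega)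
      _ = Fintype.card K ^ 2 := (sq _).symm
  have hcpos : 0 < (Fintype.card K ^ 2 - 1) * (Fintype.card K ^ 2 - Fintype.card K) :=
    Nat.mul_pos (by omega) (by omega)
  have hfinal := hcardPP.symm.trans hcardPP2
  exact Nat.eq_of_mul_eq_mul_left hcpos ((mul_comm _ _).trans hfinal)
end

section
/- Let V be a symplectic space of dimension 2n over a field K with n ≥ 4. Then the orthogonality graph G(V) has diameter 2: any two distinct non-adjacent 2-dimensional non-degenerate subspaces S, W admit a common orthogonal 2-dimensional non-degenerate subspace T with T ⊥ S and T ⊥ W. -/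
open Module LinearMap.BilinForm

theorem stmt_14 {K V : Type*} [Field K] [AddCommGroup V] [Module K V]
    (n : ℕ) (hn : 4 ≤ n) (hV : Module.finrank K V = 2 * n)
    (Ψ : LinearMap.BilinForm K V) (hΨ : Ψ.IsAlt) (hnd : Ψ.Nondegenerate)
    (S W : Submodule K V)
    (hS2 : Module.finrank K S = 2) (hSnd : (Ψ.restrict S).Nondegenerate)
    (hW2 : Module.finrank K W = 2) (hWnd : (Ψ.restrict W).Nondegenerate)
    (hSW : S ≠ W) (hnadj : ¬ ∀ s ∈ S, ∀ w ∈ W, Ψ s w = 0) :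
    ∃ T : Submodule K V, Module.finrank K T = 2 ∧ (Ψ.restrict T).Nondegenerate ∧
      (∀ t ∈ T, ∀ s ∈ S, Ψ t s = 0) ∧ (∀ t ∈ T, ∀ w ∈ W, Ψ t w = 0) := by
  have hrefl : Ψ.IsRefl := hΨ.isRefl
  have hfin : FiniteDimensional K V := .of_finrank_pos (by omega)
  set U : Submodule K V := S ⊔ W with hU
  have hU4 : finrank K U ≤ 4 := by
    rw [hU]
    have := Submodule.finrank_add_le_finrank_add_finrank S W
    omega
  have hOrank : finrank K (Ψ.orthogonal U) = finrank K V - finrank K U :=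
    finrank_orthogonal hnd U
  -- find a non-orthogonal pair in the orthogonal complement of U
  obtain ⟨u, hu, v, hv, huv⟩ :
      ∃ u ∈ Ψ.orthogonal U, ∃ v ∈ Ψ.orthogonal U, Ψ u v ≠ 0 := by
    by_contra h
    push_neg at h
    have hle : Ψ.orthogonal U ≤ U := by
      have : Ψ.orthogonal U ≤ Ψ.orthogonal (Ψ.orthogonal U) := fun x hx => by
        intro y hy
        exact hrefl _ _ (h x hx y hy)
      rwa [orthogonal_orthogonal hnd hrefl] at this
    have hdim : finrank K (Ψ.orthogonal U) ≤ finrank K U := Submodule.finrank_mono hle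
    have hUn : finrank K U = 4 := by omega
    have hUeq : Ψ.orthogonal U = U := by
      apply Submodule.eq_of_le_of_finrank_le hle
      omega
    -- S is totally isotropic, contradicting nondegeneracy of Ψ on S
    have hS0 : ∀ s ∈ S, ∀ s' ∈ S, Ψ s s' = 0 := by
      intro s hs s' hs'
      have hs'U : s' ∈ Ψ.orthogonal U := by
        rw [hUeq]; exact Submodule.mem_sup_left hs'
      exact hs'U s (Submodule.mem_sup_left hs)
    obtain ⟨x, hx⟩ : ∃ x : S, x ≠ 0 := by
      have : Nontrivial S := Module.nontrivial_of_finrank_pos (R := K) (by omega)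
      exact exists_ne 0
    exact hx (hSnd.1 x fun y => by simpa using hS0 x x.2 y y.2)
  -- T = span {u, v}
  refine ⟨Submodule.span K {u, v}, ?_, ?_, ?_, ?_⟩
  · have hind : LinearIndependent K ![u, v] := by
      refine LinearIndependent.pair_iff.2 fun a b hab => ?_
      have h1 : Ψ (a • u + b • v) v = 0 := by rw [hab]; simp
      have h2 : Ψ (a • u + b • v) u = 0 := by rw [hab]; simp
      simp only [map_add, map_smul, LinearMap.add_apply, LinearMap.smul_apply, smul_eq_mul,
        hΨ u, hΨ v, mul_zero, add_zero, zero_add] at h1 h2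
      constructor
      · rcases mul_eq_zero.1 h1 with h | h
        · exact h
        · exact absurd h huv
      · have hvu : Ψ v u ≠ 0 := fun h0 => huv (hrefl _ _ h0)
        rcases mul_eq_zero.1 h2 with h | h
        · exact h
        · exact absurd h hvu
    have hr : Set.range ![u, v] = {u, v} := by
      rw [Matrix.range_cons, Matrix.range_cons_empty, Set.singleton_union]
    rw [show ({u, v} : Set V) = Set.range ![u, v] from hr.symm]
    simpa using finrank_span_eq_card hind
  · refine (LinearMap.IsRefl.nondegenerate_iff_separatingLeft (B := Ψ.restrict (Submodule.span K {u, v})) (fun x y h => hrefl _ _ h)).2 ?_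
    intro x hx
    obtain ⟨a, b, hab⟩ := Submodule.mem_span_pair.1 x.2
    have h1 : Ψ (x : V) v = 0 := by simpa using hx ⟨v, Submodule.subset_span (by simp)⟩
    have h2 : Ψ (x : V) u = 0 := by simpa using hx ⟨u, Submodule.subset_span (by simp)⟩
    rw [← hab] at h1 h2
    simp only [map_add, map_smul, LinearMap.add_apply, LinearMap.smul_apply, smul_eq_mul,
      hΨ u, hΨ v, mul_zero, add_zero, zero_add] at h1 h2
    have ha : a = 0 := by
      rcases mul_eq_zero.1 h1 with h | h
      · exact h
      · exact absurd h huv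
    have hb : b = 0 := by
      have hvu : Ψ v u ≠ 0 := fun h0' => huv (hrefl _ _ h0')
      rcases mul_eq_zero.1 h2 with h | h
      · exact h
      · exact absurd h hvu
    ext
    rw [← hab, ha, hb]
    simp
  · intro t ht s hs
    have htO : t ∈ Ψ.orthogonal U := by
      refine Submodule.span_le.2 ?_ ht
      rintro x (rfl | rfl) <;> simp_all
    exact hrefl _ _ (htO s (Submodule.mem_sup_left hs))
  · intro t ht w hw
    have htO : t ∈ Ψ.orthogonal U := by
      refine Submodule.span_le.2 ?_ ht
      rintro x (rfl | rfl) <;> simp_all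
    exact hrefl _ _ (htO w (Submodule.mem_sup_right hw))
end

section
/- Let V be a symplectic space of dimension 2n over a field K with n ≥ 3. Then the orthogonality graph G(V) on 2-dimensional non-degenerate subspaces is connected. -/
open Module Submodule LinearMap.BilinForm

section Stmt15Aux

variable {K V : Type*} [Field K] [AddCommGroup V] [Module K V]
variable {Ψ : LinearMap.BilinForm K V}

private lemma stmt15_exists_pair (hΨ : Ψ.IsAlt) {X : Submodule K V}
    (h2 : Module.finrank K X = 2) (hX : (Ψ.restrict X).Nondegenerate) :
    ∃ a ∈ X, ∃ b ∈ X, Ψ a b ≠ 0 := by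
  have hXb : X ≠ ⊥ := by
    intro h; rw [h, finrank_bot] at h2; omega
  obtain ⟨a, haX, ha⟩ := Submodule.exists_mem_ne_zero_of_ne_bot hXb
  by_contra h
  push_neg at h
  refine ha ?_
  have := hX.1 ⟨a, haX⟩ (fun y => by
    simpa using h a haX y y.2)
  simpa using this

private lemma stmt15_vertexspan (hΨ : Ψ.IsAlt) {u v : V} (huv : Ψ u v ≠ 0) :
    Module.finrank K (span K ({u, v} : Set V)) = 2 ∧
      (Ψ.restrict (span K ({u, v} : Set V))).Nondegenerate := by
  have hu : u ≠ 0 := fun h => huv (by simp [h])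
  have hv : v ≠ 0 := fun h => huv (by simp [h])
  constructor
  · have hli : LinearIndependent K ![u, v] := by
      rw [LinearIndependent.pair_iff]
      intro s t hst
      have h1 : Ψ (s • u + t • v) v = 0 := by rw [hst]; simp
      have h2 : Ψ (s • u + t • v) u = 0 := by rw [hst]; simp
      simp only [map_add, map_smul, LinearMap.add_apply, LinearMap.smul_apply,
        smul_eq_mul, hΨ u, hΨ v, mul_zero, add_zero, zero_add] at h1 h2
      have hs : s = 0 := by
        rcases mul_eq_zero.1 h1 with hs | hc
        · exact hs
        · exact absurd hc huv
      have hvu : Ψ v u = -Ψ u v := (LinearMap.IsAlt.neg hΨ u v).symm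
      rw [hvu] at h2
      have ht : t = 0 := by
        rcases mul_eq_zero.1 h2 with ht | hc
        · exact ht
        · exact absurd (neg_eq_zero.1 hc) huv
      exact ⟨hs, ht⟩
    have hrange : Set.range ![u, v] = ({u, v} : Set V) := by
      ext x
      simp [Matrix.range_cons, Matrix.range_empty, or_comm]
    have := finrank_span_eq_card hli
    rw [hrange] at this
    simpa using this
  · refine (LinearMap.IsRefl.nondegenerate_iff_separatingLeft (B := Ψ.restrict (span K ({u, v} : Set V))) (fun x y h => hΨ.isRefl x y h)).2 ?_
    intro x hx
    obtain ⟨a, b, hab⟩ := Submodule.mem_span_pair.1 x.2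
    have hxu : Ψ (x : V) u = 0 := by
      have := hx ⟨u, subset_span (by simp)⟩
      simpa using this
    have hxv : Ψ (x : V) v = 0 := by
      have := hx ⟨v, subset_span (by simp)⟩
      simpa using this
    rw [← hab] at hxu hxv
    simp only [map_add, map_smul, LinearMap.add_apply, LinearMap.smul_apply,
      smul_eq_mul, hΨ u, hΨ v, mul_zero, add_zero, zero_add] at hxu hxv
    have ha : a = 0 := by
      rcases mul_eq_zero.1 hxv with h | hc
      · exact h
      · exact absurd hc huv
    have hvu : Ψ v u = -Ψ u v := (LinearMap.IsAlt.neg hΨ u v).symm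
    rw [hvu] at hxu
    have hb : b = 0 := by
      rcases mul_eq_zero.1 hxu with h | hc
      · exact h
      · exact absurd (neg_eq_zero.1 hc) huv
    ext
    rw [← hab, ha, hb]
    simp

private lemma stmt15_key (hΨ : Ψ.IsAlt) (hnd : Ψ.Nondegenerate) [FiniteDimensional K V]
    {n : ℕ} (hn : 3 ≤ n) (hV : Module.finrank K V = 2 * n)
    {X Y : Submodule K V} (hX2 : Module.finrank K X = 2)
    (hXnd : (Ψ.restrict X).Nondegenerate)
    (hY2 : Module.finrank K Y = 2) (hYnd : (Ψ.restrict Y).Nondegenerate)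
    (hiso : ∀ u ∈ Ψ.orthogonal (X ⊔ Y), ∀ v ∈ Ψ.orthogonal (X ⊔ Y), Ψ u v = 0) :
    X ⊔ Y = Y ⊔ Ψ.orthogonal (X ⊔ Y) := by
  have hrefl := hΨ.isRefl
  set U := X ⊔ Y with hU
  set W := Ψ.orthogonal U with hWdef
  have hWU : W ≤ U := by
    have h1 : W ≤ Ψ.orthogonal W := fun w hw x hx => hiso x hx w hw
    rwa [hWdef, orthogonal_orthogonal hnd hrefl] at h1
  have hdW : Module.finrank K W = 2 * n - Module.finrank K U := by
    rw [hWdef, finrank_orthogonal hnd, hV]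
  have hdU : Module.finrank K U ≤ 4 := by
    have := Submodule.finrank_sup_add_finrank_inf_eq X Y
    rw [← hU] at this
    omega
  have hdUV : Module.finrank K U ≤ 2 * n := by
    have := Submodule.finrank_le U
    omega
  have hYW : Y ⊓ W = ⊥ := by
    rw [eq_bot_iff]
    rintro x hx
    obtain ⟨hxY, hxW⟩ := Submodule.mem_inf.1 hx
    have : (⟨x, hxY⟩ : Y) = 0 := by
      refine hYnd.1 ⟨x, hxY⟩ (fun y => ?_)
      have h1 : Ψ (y : V) x = 0 := hxW y (Submodule.mem_sup_right y.2)
      simpa using hrefl _ _ h1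
    simpa using this
  have hsup : Module.finrank K (Y ⊔ W : Submodule K V) =
      2 + Module.finrank K W := by
    have := Submodule.finrank_sup_add_finrank_inf_eq Y W
    rw [hYW] at this
    simp only [finrank_bot, add_zero] at this
    omega
  have hle2 : Y ⊔ W ≤ U := sup_le le_sup_right hWU
  have hmono : Module.finrank K (Y ⊔ W : Submodule K V) ≤ Module.finrank K U :=
    Submodule.finrank_mono hle2
  refine (Submodule.eq_of_le_of_finrank_le hle2 ?_).symm
  omega

end Stmt15Aux

set_option maxHeartbeats 2000000 in
theorem stmt_15 {K V : Type*} [Field K] [AddCommGroup V] [Module K V]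
    (n : ℕ) (hn : 3 ≤ n) (hV : Module.finrank K V = 2 * n)
    (Ψ : LinearMap.BilinForm K V) (hΨ : Ψ.IsAlt) (hnd : Ψ.Nondegenerate) :
    (SimpleGraph.fromRel
      (fun A B : {W : Submodule K V //
          Module.finrank K W = 2 ∧ (Ψ.restrict W).Nondegenerate} =>
        ∀ a ∈ A.1, ∀ b ∈ B.1, Ψ a b = 0)).Connected := by
  have hfin : FiniteDimensional K V := FiniteDimensional.of_finrank_pos (by rw [hV]; omega)
  have hrefl := hΨ.isRefl
  set S := {W : Submodule K V //
      Module.finrank K W = 2 ∧ (Ψ.restrict W).Nondegenerate} with hS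
  set G := SimpleGraph.fromRel
      (fun A B : S => ∀ a ∈ A.1, ∀ b ∈ B.1, Ψ a b = 0) with hG
  -- adjacency helper
  have hadj : ∀ A C : S, C.1 ≤ Ψ.orthogonal A.1 → G.Adj A C := by
    intro A C hle
    have hne : A ≠ C := by
      intro h
      obtain ⟨a, ha, b, hb, hab⟩ := stmt15_exists_pair hΨ A.2.1 A.2.2
      exact hab (hle (h ▸ hb) a ha)
    rw [hG, SimpleGraph.fromRel_adj]
    exact ⟨hne, Or.inl fun a ha b hb => hle hb a ha⟩
  -- length ≤ 2 reachability helper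
  have hreach2 : ∀ X Y : S,
      (∃ u ∈ Ψ.orthogonal (X.1 ⊔ Y.1), ∃ v ∈ Ψ.orthogonal (X.1 ⊔ Y.1), Ψ u v ≠ 0) →
      G.Reachable X Y := by
    rintro X Y ⟨u, hu, v, hv, huv⟩
    set C : S := ⟨span K ({u, v} : Set V), stmt15_vertexspan hΨ huv⟩ with hC
    have hCle : C.1 ≤ Ψ.orthogonal (X.1 ⊔ Y.1) := by
      rw [hC]
      exact span_le.2 (by
        rintro x hx
        rcases hx with rfl | hx
        · exact hu
        · simp only [Set.mem_singleton_iff] at hx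
          rw [hx]; exact hv)
    have h1 := hadj X C (hCle.trans (orthogonal_le (le_sup_left : X.1 ≤ X.1 ⊔ Y.1)))
    have h2 := hadj Y C (hCle.trans (orthogonal_le (le_sup_right : Y.1 ≤ X.1 ⊔ Y.1)))
    exact h1.reachable.trans h2.reachable.symm
  have hnonempty : Nonempty S := by
    have : (0 : ℕ) < Module.finrank K V := by rw [hV]; omega
    have : Nontrivial V := Module.nontrivial_of_finrank_pos this
    obtain ⟨x, hx⟩ := exists_ne (0 : V)
    obtain ⟨y, hy⟩ : ∃ y, Ψ x y ≠ 0 := by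
      by_contra h; push_neg at h
      exact hx (hnd.1 x fun y => h y)
    exact ⟨⟨_, stmt15_vertexspan hΨ hy⟩⟩
  refine ⟨?_⟩
  intro A B
  by_cases h : ∃ u ∈ Ψ.orthogonal (A.1 ⊔ B.1), ∃ v ∈ Ψ.orthogonal (A.1 ⊔ B.1), Ψ u v ≠ 0
  · exact hreach2 A B h
  push_neg at h
  -- pick a nonzero w orthogonal to A ⊔ B
  have hWnebot : Ψ.orthogonal (A.1 ⊔ B.1) ≠ ⊥ := by
    intro hbot
    have h1 := finrank_orthogonal hnd (A.1 ⊔ B.1)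
    have h2 : Module.finrank K (A.1 ⊔ B.1 : Submodule K V) ≤ 4 := by
      have := Submodule.finrank_sup_add_finrank_inf_eq A.1 B.1
      have hA := A.2.1; have hB := B.2.1
      omega
    rw [hbot, finrank_bot, hV] at h1
    have := Submodule.finrank_le (A.1 ⊔ B.1)
    rw [hV] at this
    omega
  obtain ⟨w, hw, hw0⟩ := Submodule.exists_mem_ne_zero_of_ne_bot hWnebot
  have hwA : w ∈ Ψ.orthogonal A.1 := orthogonal_le (le_sup_left : A.1 ≤ A.1 ⊔ B.1) hw
  have hOAnd : (Ψ.restrict (Ψ.orthogonal A.1)).Nondegenerate := by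
    apply Ψ.nondegenerate_restrict_of_disjoint_orthogonal hrefl
    rw [orthogonal_orthogonal hnd hrefl]
    exact (isCompl_orthogonal_of_restrict_nondegenerate hrefl A.2.2).symm.disjoint
  obtain ⟨z, hz, hwz⟩ : ∃ z ∈ Ψ.orthogonal A.1, Ψ w z ≠ 0 := by
    by_contra hc; push_neg at hc
    refine hw0 ?_
    have := hOAnd.1 ⟨w, hwA⟩ (fun y => by simpa using hc y y.2)
    simpa using this
  set C : S := ⟨span K ({w, z} : Set V), stmt15_vertexspan hΨ hwz⟩ with hC
  have hCA : C.1 ≤ Ψ.orthogonal A.1 := by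
    rw [hC]
    exact span_le.2 (by
      rintro x hx
      rcases hx with rfl | hx
      · exact hwA
      · simp only [Set.mem_singleton_iff] at hx
        rw [hx]; exact hz)
  have hadjAC := hadj A C hCA
  have hpair : ∃ u ∈ Ψ.orthogonal (C.1 ⊔ B.1), ∃ v ∈ Ψ.orthogonal (C.1 ⊔ B.1),
      Ψ u v ≠ 0 := by
    by_contra hc; push_neg at hc
    have hkey := stmt15_key hΨ hnd hn hV C.2.1 C.2.2 B.2.1 B.2.2 hc
    have hwC : w ∈ C.1 := subset_span (by simp)
    have hwm : w ∈ B.1 ⊔ Ψ.orthogonal (C.1 ⊔ B.1) := by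
      rw [← hkey]
      exact Submodule.mem_sup_left hwC
    obtain ⟨b, hb, w', hw', hbw⟩ := Submodule.mem_sup.1 hwm
    have hb0 : b = 0 := by
      have hall : ∀ y ∈ B.1, Ψ y b = 0 := by
        intro y hy
        have h1 : Ψ y w = 0 := orthogonal_le (le_sup_right : B.1 ≤ A.1 ⊔ B.1) hw y hy
        have h2 : Ψ y w' = 0 := hw' y (Submodule.mem_sup_right hy)
        have hbeq : b = w - w' := by
          rw [← hbw]; abel
        rw [hbeq, map_sub, h1, h2, sub_zero]
      have := B.2.2.1 ⟨b, hb⟩ (fun y => by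
        simpa using hrefl _ _ (hall y y.2))
      simpa using this
    have hww' : w = w' := by rw [← hbw, hb0, zero_add]
    have hzw : Ψ z w = 0 := by
      rw [hww']
      exact hw' z (Submodule.mem_sup_left (subset_span (by simp)))
    exact hwz (hrefl _ _ hzw)
  exact hadjAC.reachable.trans (hreach2 C B hpair)
end

section
/- For q ≥ 2 a real number and integers 3 ≤ j < i, define P_j(q) = (q^{2j−2} − 1)/(q^{j−2}(q² − 1)) + j − 1. Then P_j(q) + (i − j) < P_i(q). -/
theorem stmt_16 (q : ℝ) (hq : 2 ≤ q) (i j : ℕ) (hj : 3 ≤ j) (hij : j < i) :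
    (q ^ (2 * j - 2) - 1) / (q ^ (j - 2) * (q ^ 2 - 1)) + (j : ℝ) - 1 + ((i : ℝ) - j) <
      (q ^ (2 * i - 2) - 1) / (q ^ (i - 2) * (q ^ 2 - 1)) + (i : ℝ) - 1 := by
  have hq1 : (1:ℝ) < q := by linarith
  have hq0 : (0:ℝ) < q := by linarith
  have hq2 : (0:ℝ) < q ^ 2 - 1 := by nlinarith
  obtain ⟨a, rfl⟩ : ∃ a, j = a + 3 := ⟨j - 3, by omega⟩
  obtain ⟨b, rfl⟩ : ∃ b, i = (a + 3) + (b + 1) := ⟨i - (a + 3) - 1, by omega⟩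
  rw [show 2 * (a + 3) - 2 = 2 * a + 4 by omega, show (a + 3) - 2 = a + 1 by omega,
    show 2 * ((a + 3) + (b + 1)) - 2 = 2 * a + 2 * b + 6 by omega,
    show ((a + 3) + (b + 1)) - 2 = a + b + 2 by omega]
  have key : (q ^ (2 * a + 4) - 1) / (q ^ (a + 1) * (q ^ 2 - 1)) <
      (q ^ (2 * a + 2 * b + 6) - 1) / (q ^ (a + b + 2) * (q ^ 2 - 1)) := by
    rw [div_lt_div_iff₀ (by positivity) (by positivity)]
    have e1 : q ^ (3 * a + b + 6) < q ^ (3 * a + 2 * b + 7) :=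
      pow_lt_pow_right₀ hq1 (by omega)
    have e2 : q ^ (a + 1) < q ^ (a + b + 2) := pow_lt_pow_right₀ hq1 (by omega)
    have m1 : q ^ (2 * a + 4) * q ^ (a + b + 2) = q ^ (3 * a + b + 6) := by
      rw [← pow_add]; congr 1; omega
    have m2 : q ^ (2 * a + 2 * b + 6) * q ^ (a + 1) = q ^ (3 * a + 2 * b + 7) := by
      rw [← pow_add]; congr 1; omega
    nlinarith [mul_pos hq2 (sub_pos.mpr e1), mul_pos hq2 (sub_pos.mpr e2)]
  push_cast
  linarith
end
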